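/- arXiv:2508.01787 — 6 statements merged into one kernel-verified Lean document; each statement's English description precedes it below -/
import Mathlib

section
/- Let 𝒜 be a complex unital Banach algebra with submultiplicative norm and ‖1‖ = 1. Let M ≥ 1 and let a₁, …, a_M ∈ 𝒜 be pairwise commuting elements with ‖a_k‖ ≤ r for all k, where r ≥ 0. Then ‖∏_{k=1}^{M} (1 + a_k) − exp(a₁ + ⋯ + a_M)‖ ≤ M r² e^{M r}. -/
open NormedSpace

section Aux

variable {𝒜 : Type*} [NormedRing 𝒜] [NormedAlgebra ℂ 𝒜] [CompleteSpace 𝒜] [NormOneClass 𝒜]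

/-- Norm bound for the exponential. -/
lemma aux_norm_exp_le (x : 𝒜) : ‖exp x‖ ≤ Real.exp ‖x‖ := by
  rw [exp_eq_tsum ℂ, Real.exp_eq_exp_ℝ, exp_eq_tsum ℝ]
  refine (norm_tsum_le_tsum_norm (norm_expSeries_summable' x)).trans ?_
  refine Summable.tsum_le_tsum (fun n => ?_) (norm_expSeries_summable' x)
    (expSeries_summable' (𝕂 := ℝ) ‖x‖)
  rw [norm_smul, norm_inv, Complex.norm_natCast, smul_eq_mul]
  exact mul_le_mul_of_nonneg_left (norm_pow_le x n) (by positivity)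

set_option maxHeartbeats 1000000 in
lemma aux_norm_exp_sub_le (x : 𝒜) : ‖exp x - (1 + x)‖ ≤ ‖x‖ ^ 2 * Real.exp ‖x‖ := by
  have hsum : Summable fun n : ℕ => ((Nat.factorial n : ℂ))⁻¹ • x ^ n := expSeries_summable' x
  have hsum1 : Summable fun n : ℕ => ((Nat.factorial (n+1) : ℂ))⁻¹ • x ^ (n + 1) :=
    ((summable_nat_add_iff (f := fun n : ℕ => ((Nat.factorial n : ℂ))⁻¹ • x ^ n) 1).mpr hsum)
  have hsum2 : Summable fun n : ℕ => ((Nat.factorial (n+2) : ℂ))⁻¹ • x ^ (n + 2) :=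
    ((summable_nat_add_iff (f := fun n : ℕ => ((Nat.factorial n : ℂ))⁻¹ • x ^ n) 2).mpr hsum)
  have hexp : exp x = 1 + x + ∑' n : ℕ, ((Nat.factorial (n+2) : ℂ))⁻¹ • x ^ (n + 2) := by
    rw [exp_eq_tsum ℂ]
    beta_reduce
    rw [Summable.tsum_eq_zero_add hsum, Summable.tsum_eq_zero_add hsum1]
    simp [Nat.factorial]
    abel
  rw [hexp]
  have h1 : ‖1 + x + ∑' n : ℕ, ((Nat.factorial (n+2) : ℂ))⁻¹ • x ^ (n + 2) - (1 + x)‖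
      = ‖∑' n : ℕ, ((Nat.factorial (n+2) : ℂ))⁻¹ • x ^ (n + 2)‖ := by rw [add_sub_cancel_left]
  rw [h1]
  have hreal : Summable fun n : ℕ => ‖x‖ ^ 2 * (((Nat.factorial n : ℝ))⁻¹ * ‖x‖ ^ n) := by
    apply Summable.mul_left
    have := (expSeries_summable' (𝕂 := ℝ) ‖x‖)
    simpa [smul_eq_mul] using this
  refine (norm_tsum_le_tsum_norm ((summable_nat_add_iff
    (f := fun n : ℕ => ‖((Nat.factorial n : ℂ))⁻¹ • x ^ n‖) 2).mpr (norm_expSeries_summable' x))).trans ?_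
  have hbound : ∀ n : ℕ, ‖((Nat.factorial (n+2) : ℂ))⁻¹ • x ^ (n + 2)‖
      ≤ ‖x‖ ^ 2 * (((Nat.factorial n : ℝ))⁻¹ * ‖x‖ ^ n) := by
    intro n
    rw [norm_smul, norm_inv, Complex.norm_natCast]
    have h2 : ‖x ^ (n + 2)‖ ≤ ‖x‖ ^ (n + 2) := norm_pow_le' x (by omega)
    have h3 : ((Nat.factorial n : ℝ))⁻¹ * ‖x‖ ^ (n + 2) = ‖x‖ ^ 2 * (((Nat.factorial n : ℝ))⁻¹ * ‖x‖ ^ n) := by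
      ring
    have h4 : ((Nat.factorial (n+2) : ℝ))⁻¹ ≤ ((Nat.factorial n : ℝ))⁻¹ := by
      apply inv_anti₀
      · positivity
      · exact_mod_cast Nat.factorial_le (by omega)
    calc ((Nat.factorial (n+2) : ℝ))⁻¹ * ‖x ^ (n + 2)‖
        ≤ ((Nat.factorial n : ℝ))⁻¹ * ‖x‖ ^ (n + 2) := by
          apply mul_le_mul h4 h2 (norm_nonneg _) (by positivity)
      _ = ‖x‖ ^ 2 * (((Nat.factorial n : ℝ))⁻¹ * ‖x‖ ^ n) := h3
  refine (Summable.tsum_le_tsum hbound ((summable_nat_add_iff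
    (f := fun n : ℕ => ‖((Nat.factorial n : ℂ))⁻¹ • x ^ n‖) 2).mpr (norm_expSeries_summable' x)) hreal).trans ?_
  rw [tsum_mul_left]
  have hval : ∑' n : ℕ, ((Nat.factorial n : ℝ))⁻¹ * ‖x‖ ^ n = Real.exp ‖x‖ := by
    rw [Real.exp_eq_exp_ℝ, exp_eq_tsum ℝ]
    simp [smul_eq_mul]
  rw [hval]

lemma aux_norm_prod_le {B : ℝ} : ∀ l : List 𝒜, (∀ x ∈ l, ‖x‖ ≤ B) →
    ‖l.prod‖ ≤ B ^ l.length := by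
  intro l
  induction l with
  | nil => simp
  | cons x l ih =>
    intro h
    have hx : ‖x‖ ≤ B := h x (List.mem_cons_self)
    have hB : 0 ≤ B := (norm_nonneg x).trans hx
    simp only [List.prod_cons, List.length_cons, pow_succ]
    calc ‖x * l.prod‖ ≤ ‖x‖ * ‖l.prod‖ := norm_mul_le _ _
      _ ≤ B * B ^ l.length := mul_le_mul hx (ih fun y hy => h y (List.mem_cons_of_mem _ hy))
          (norm_nonneg _) hB
      _ = B ^ l.length * B := by ring

lemma aux_prod_sub_prod {B ε : ℝ} (hB : 0 ≤ B) (hε : 0 ≤ ε) :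
    ∀ {l m : List 𝒜}, List.Forall₂ (fun x y => ‖x‖ ≤ B ∧ ‖y‖ ≤ B ∧ ‖x - y‖ ≤ ε) l m →
    ‖l.prod‖ ≤ B ^ l.length ∧
      ‖l.prod - m.prod‖ ≤ l.length * ε * B ^ (l.length - 1) := by
  intro l m h
  induction h with
  | nil => simp
  | @cons b c l m hbc hlm ih =>
    obtain ⟨hb, hc, hdiff⟩ := hbc
    obtain ⟨hlprod, ih⟩ := ih
    simp only [List.prod_cons, List.length_cons]
    constructor
    · calc ‖b * l.prod‖ ≤ ‖b‖ * ‖l.prod‖ := norm_mul_le _ _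
        _ ≤ B * B ^ l.length := mul_le_mul hb hlprod (norm_nonneg _) hB
        _ = B ^ (l.length + 1) := by rw [pow_succ]; ring
    have key : b * l.prod - c * m.prod = (b - c) * l.prod + c * (l.prod - m.prod) := by
      rw [sub_mul, mul_sub]; abel
    rw [key]
    have h1 : ‖(b - c) * l.prod‖ ≤ ε * B ^ l.length :=
      (norm_mul_le _ _).trans (mul_le_mul hdiff hlprod (norm_nonneg _) hε)
    have h2 : ‖c * (l.prod - m.prod)‖ ≤ B * (l.length * ε * B ^ (l.length - 1)) :=
      (norm_mul_le _ _).trans (mul_le_mul hc ih (norm_nonneg _) hB)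
    have h3 : B * (l.length * ε * B ^ (l.length - 1)) ≤ l.length * ε * B ^ l.length := by
      rcases Nat.eq_zero_or_pos l.length with hn | hn
      · simp [hn]
      · obtain ⟨k, hk⟩ := Nat.exists_eq_succ_of_ne_zero hn.ne'
        rw [hk]
        simp only [Nat.succ_sub_one]
        rw [pow_succ]
        apply le_of_eq
        push_cast
        ring
    calc ‖(b - c) * l.prod + c * (l.prod - m.prod)‖
        ≤ ‖(b - c) * l.prod‖ + ‖c * (l.prod - m.prod)‖ := norm_add_le _ _
      _ ≤ ε * B ^ l.length + l.length * ε * B ^ l.length := by linarith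
      _ = (l.length + 1) * ε * B ^ l.length := by ring
      _ = (↑(l.length + 1)) * ε * B ^ (l.length + 1 - 1) := by push_cast; ring_nf

lemma aux_exp_list_sum : ∀ l : List 𝒜, (∀ x ∈ l, ∀ y ∈ l, Commute x y) →
    exp l.sum = (l.map (exp)).prod := by
  intro l
  induction l with
  | nil => simp [exp_zero]
  | cons x l ih =>
    intro h
    simp only [List.sum_cons, List.map_cons, List.prod_cons]
    rw [exp_add_of_commute_of_mem_ball (𝕂 := ℂ) (Commute.list_sum_right x l fun y hy =>
      h x (List.mem_cons_self) y (List.mem_cons_of_mem _ hy))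
      ((expSeries_radius_eq_top ℂ 𝒜).symm ▸ edist_lt_top _ _)
      ((expSeries_radius_eq_top ℂ 𝒜).symm ▸ edist_lt_top _ _),
      ih fun a ha b hb => h a (List.mem_cons_of_mem _ ha) b (List.mem_cons_of_mem _ hb)]

end Aux

/-- In a complex unital Banach algebra, for pairwise commuting elements `a₁, …, a_M` of norm
at most `r`, the ordered product `∏ (1 + a_k)` differs from `exp(a₁ + ⋯ + a_M)` by at most
`M r² e^{M r}` in norm. -/
theorem prod_one_add_sub_exp_sum_norm_le
    {𝒜 : Type*} [NormedRing 𝒜] [NormedAlgebra ℂ 𝒜] [CompleteSpace 𝒜] [NormOneClass 𝒜]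
    (M : ℕ) (hM : 1 ≤ M) (r : ℝ) (hr : 0 ≤ r) (a : Fin M → 𝒜)
    (hcomm : ∀ i j, Commute (a i) (a j)) (ha : ∀ k, ‖a k‖ ≤ r) :
    ‖(List.ofFn fun k : Fin M => 1 + a k).prod - NormedSpace.exp (∑ k, a k)‖
      ≤ M * r ^ 2 * Real.exp (M * r) := by
  have hexp_sum : NormedSpace.exp (∑ k, a k)
      = (List.ofFn fun k : Fin M => NormedSpace.exp (a k)).prod := by
    have h1 : (∑ k, a k) = (List.ofFn a).sum := (List.sum_ofFn (f := a)).symm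
    rw [h1, aux_exp_list_sum (List.ofFn a) ?_, List.map_ofFn]
    · rfl
    · intro x hx y hy
      obtain ⟨i, hi⟩ := List.mem_ofFn.mp hx
      obtain ⟨j, hj⟩ := List.mem_ofFn.mp hy
      rw [← hi, ← hj]; exact hcomm i j
  rw [hexp_sum]
  set B := Real.exp r with hB
  set ε := r ^ 2 * Real.exp r with hε
  have hB0 : (0:ℝ) ≤ B := (Real.exp_pos r).le
  have hε0 : (0:ℝ) ≤ ε := by positivity
  have hF : List.Forall₂ (fun x y : 𝒜 => ‖x‖ ≤ B ∧ ‖y‖ ≤ B ∧ ‖x - y‖ ≤ ε)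
      (List.ofFn fun k : Fin M => 1 + a k)
      (List.ofFn fun k : Fin M => NormedSpace.exp (a k)) := by
    rw [List.forall₂_iff_get]
    refine ⟨by simp, fun i h₁ h₂ => ?_⟩
    rw [List.get_ofFn, List.get_ofFn]
    set k : Fin M := Fin.cast (by simp) (⟨i, h₁⟩ : Fin (List.ofFn fun k : Fin M => 1 + a k).length)
    refine ⟨?_, ?_, ?_⟩
    · calc ‖1 + a _‖ ≤ ‖(1:𝒜)‖ + ‖a _‖ := norm_add_le _ _
        _ = 1 + ‖a _‖ := by rw [norm_one]
        _ ≤ 1 + r := by linarith [ha (Fin.cast (by simp) (⟨i, h₁⟩ : Fin _))]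
        _ ≤ B := by rw [hB]; linarith [Real.add_one_le_exp r]
    · exact (aux_norm_exp_le _).trans (Real.exp_le_exp.mpr (ha _))
    · rw [norm_sub_rev]
      refine (aux_norm_exp_sub_le _).trans ?_
      have hak := ha (Fin.cast (by simp) (⟨i, h₂⟩ : Fin _))
      rw [hε]
      exact mul_le_mul (pow_le_pow_left₀ (norm_nonneg _) (ha _) 2)
        (Real.exp_le_exp.mpr (ha _)) (Real.exp_pos _).le (by positivity)
  have hmain := (aux_prod_sub_prod hB0 hε0 hF).2
  have hlen : (List.ofFn fun k : Fin M => 1 + a k).length = M := by simp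
  rw [hlen] at hmain
  refine hmain.trans (le_of_eq ?_)
  rw [hB, hε]
  obtain ⟨m, rfl⟩ := Nat.exists_eq_add_of_le hM
  simp only [Nat.add_sub_cancel_left] at *
  rw [← Real.exp_nat_mul]
  have hsplit : Real.exp ((((1 + m : ℕ)) : ℝ) * r) = Real.exp r * Real.exp ((m : ℝ) * r) := by
    rw [← Real.exp_add]; congr 1; push_cast; ring
  rw [hsplit]; ring
end

section
/- Let X be a finite nonempty set, β > 0, T > 0, and let A, B, Q be pairwise commuting hermitian operators on ℂ^X with B positive definite. Set f = (I + exp(−βQ − 2TB))^{−1} and define, for t,t' ∈ [0,T]: C_{−+}(t,t') = exp(−itA) f exp(it'A) exp((−2T+t+t')B); C_{+−}(t,t') = −exp(−itA) f exp(−βQ) exp(it'A) exp(−(t+t')B); C_{++}(t,t') = 1_{t≥t'} exp(−itA) f exp(it'A) exp((t'−t)B) − 1_{t<t'} exp(−itA) f exp(−βQ) exp(it'A) exp((t'−t−2T)B); C_{−−}(t,t') = 1_{t≤t'} exp(−itA) f exp(it'A) exp((t−t')B) − 1_{t>t'} exp(−itA) f exp(−βQ) exp(it'A) exp((t−t'−2T)B).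 Let q̃ and b̃ denote the smallest eigenvalues of Q and B respectively. Then for all t, t' ∈ [0,T] the operator norms satisfy: ‖C_{+−}(t,t')‖ ≤ e^{−βq̃} e^{−(t+t')b̃}; ‖C_{−+}(t,t')‖ ≤ e^{(−2T+t+t')b̃}; ‖C_{++}(t,t')‖ ≤ e^{−βq̃} e^{(−2T+t'−t)b̃} if t < t' and ‖C_{++}(t,t')‖ ≤ e^{(t'−t)b̃} if t ≥ t'; ‖C_{−−}(t,t')‖ ≤ e^{−βq̃} e^{(−2T+t−t')b̃} if t' < t and ‖C_{−−}(t,t')‖ ≤ e^{(t−t')b̃} if t' ≥ t. -/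
open MeasureTheory
open scoped BigOperators Matrix ComplexOrder

noncomputable section

/-- Matrix exponential (exponential series in the algebra of matrices). -/
noncomputable def mexp {X : Type*} [Fintype X] [DecidableEq X] (M : Matrix X X ℂ) :
    Matrix X X ℂ :=
  NormedSpace.exp M

/-- Operator norm of a matrix acting on the Euclidean (ℓ²) space `ℂ^X`. -/
noncomputable def opNorm {X : Type*} [Fintype X] [DecidableEq X] (M : Matrix X X ℂ) : ℝ :=
  ‖Matrix.toEuclideanCLM (𝕜 := ℂ) M‖

/-- The Keldysh covariance `C_{ρσ}(t,t')` of a dissipative system in the commuting case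
`[A,B] = [B,Q] = 0`, with `f = (I + e^{−βQ − 2TB})⁻¹`. Here `true` encodes the branch `+`
and `false` encodes the branch `−`. -/
noncomputable def keldyshCovDiss {X : Type*} [Fintype X] [DecidableEq X]
    (β T : ℝ) (A B Q : Matrix X X ℂ) : Bool → Bool → ℝ → ℝ → Matrix X X ℂ :=
  fun ρ σ t t' =>
  let f : Matrix X X ℂ := (1 + mexp ((-β : ℂ) • Q + ((-(2 * T) : ℝ) : ℂ) • B))⁻¹
  let E : ℝ → Matrix X X ℂ := fun s => mexp ((Complex.I * (s : ℂ)) • A)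
  let G : ℝ → Matrix X X ℂ := fun s => mexp (((s : ℝ) : ℂ) • B)
  match ρ, σ with
  | false, true => E (-t) * f * E t' * G (-(2 * T) + t + t')
  | true, false => -(E (-t) * f * mexp ((-β : ℂ) • Q) * E t' * G (-(t + t')))
  | true, true =>
      (if t' ≤ t then (1 : ℂ) else 0) • (E (-t) * f * E t' * G (t' - t))
        - (if t < t' then (1 : ℂ) else 0) •
          (E (-t) * f * mexp ((-β : ℂ) • Q) * E t' * G (t' - t - 2 * T))
  | false, false =>
      (if t ≤ t' then (1 : ℂ) else 0) • (E (-t) * f * E t' * G (t - t'))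
        - (if t' < t then (1 : ℂ) else 0) •
          (E (-t) * f * mexp ((-β : ℂ) • Q) * E t' * G (t - t' - 2 * T))

namespace KeldyshAux

variable {X : Type*} [Fintype X] [DecidableEq X]

lemma opNorm_nonneg (M : Matrix X X ℂ) : 0 ≤ opNorm M := norm_nonneg _

lemma opNorm_mul_le (M N : Matrix X X ℂ) : opNorm (M * N) ≤ opNorm M * opNorm N := by
  simp only [opNorm, map_mul]
  exact norm_mul_le _ _

lemma opNorm_neg (M : Matrix X X ℂ) : opNorm (-M) = opNorm M := by
  rw [opNorm, opNorm, map_neg, norm_neg]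

lemma opNorm_le_one_of_star_mul_self (M : Matrix X X ℂ) (h : star M * M = 1) :
    opNorm M ≤ 1 := by
  have h2 : ‖Matrix.toEuclideanCLM (𝕜 := ℂ) M‖ * ‖Matrix.toEuclideanCLM (𝕜 := ℂ) M‖
      = ‖star (Matrix.toEuclideanCLM (𝕜 := ℂ) M) * Matrix.toEuclideanCLM (𝕜 := ℂ) M‖ :=
    (CStarRing.norm_star_mul_self).symm
  rw [← map_star, ← map_mul, h, map_one] at h2
  have h3 : ‖(1 : EuclideanSpace ℂ X →L[ℂ] EuclideanSpace ℂ X)‖ ≤ 1 := by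
    rw [ContinuousLinearMap.one_def]; exact ContinuousLinearMap.norm_id_le
  have h4 := norm_nonneg (Matrix.toEuclideanCLM (𝕜 := ℂ) M)
  rw [opNorm]
  nlinarith [h2, h3, h4]

lemma opNorm_diagonal_le (v : X → ℂ) (c : ℝ) (hc : 0 ≤ c) (hv : ∀ i, ‖v i‖ ≤ c) :
    opNorm (Matrix.diagonal v) ≤ c := by
  rw [opNorm]
  refine ContinuousLinearMap.opNorm_le_bound _ hc (fun x => ?_)
  have hx : ∀ i, (Matrix.toEuclideanCLM (𝕜 := ℂ) (Matrix.diagonal v) x) i = v i * x i := by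
    intro i
    have h1 : x = WithLp.toLp 2 (WithLp.ofLp x) := rfl
    rw [h1, Matrix.toEuclideanCLM_toLp]
    simp [Matrix.toLin'_apply, Matrix.mulVec_diagonal]
  rw [EuclideanSpace.norm_eq, EuclideanSpace.norm_eq]
  calc Real.sqrt (∑ i, ‖(Matrix.toEuclideanCLM (𝕜 := ℂ) (Matrix.diagonal v) x) i‖ ^ 2)
      ≤ Real.sqrt (∑ i, (c * ‖x i‖) ^ 2) := by
        apply Real.sqrt_le_sqrt
        apply Finset.sum_le_sum
        intro i _
        rw [hx i]
        have : ‖v i * x i‖ ≤ c * ‖x i‖ := by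
          rw [norm_mul]
          exact mul_le_mul_of_nonneg_right (hv i) (norm_nonneg _)
        exact pow_le_pow_left₀ (norm_nonneg _) this 2
    _ = Real.sqrt (c ^ 2 * ∑ i, ‖x i‖ ^ 2) := by
        rw [Finset.mul_sum]
        congr 1
        exact Finset.sum_congr rfl fun i _ => by ring
    _ = c * Real.sqrt (∑ i, ‖x i‖ ^ 2) := by
        rw [Real.sqrt_mul (sq_nonneg c), Real.sqrt_sq hc]

lemma unitary_isUnit (V : Matrix.unitaryGroup X ℂ) : IsUnit (V : Matrix X X ℂ) :=
  ⟨⟨(V : Matrix X X ℂ), star (V : Matrix X X ℂ),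
    (Unitary.mem_iff.mp V.2).2, (Unitary.mem_iff.mp V.2).1⟩, rfl⟩

lemma unitary_inv_eq_star (V : Matrix.unitaryGroup X ℂ) :
    (V : Matrix X X ℂ)⁻¹ = star (V : Matrix X X ℂ) :=
  Matrix.inv_eq_left_inv (Unitary.mem_iff.mp V.2).1

lemma opNorm_conj_diag_le (V : Matrix.unitaryGroup X ℂ) (v : X → ℂ) (c : ℝ)
    (hc : 0 ≤ c) (hv : ∀ i, ‖v i‖ ≤ c) :
    opNorm ((V : Matrix X X ℂ) * Matrix.diagonal v * star (V : Matrix X X ℂ)) ≤ c := by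
  have hV : opNorm (V : Matrix X X ℂ) ≤ 1 :=
    opNorm_le_one_of_star_mul_self _ (Unitary.mem_iff.mp V.2).1
  have hVs : opNorm (star (V : Matrix X X ℂ)) ≤ 1 := by
    apply opNorm_le_one_of_star_mul_self
    rw [star_star]
    exact (Unitary.mem_iff.mp V.2).2
  have hD := opNorm_diagonal_le v c hc hv
  have h1 := opNorm_mul_le ((V : Matrix X X ℂ) * Matrix.diagonal v) (star (V : Matrix X X ℂ))
  have h2 := opNorm_mul_le (V : Matrix X X ℂ) (Matrix.diagonal v)
  have n1 := opNorm_nonneg ((V : Matrix X X ℂ) * Matrix.diagonal v)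
  have n2 := opNorm_nonneg (V : Matrix X X ℂ)
  have n3 := opNorm_nonneg (Matrix.diagonal v)
  have n4 := opNorm_nonneg (star (V : Matrix X X ℂ))
  nlinarith

lemma mexp_conj (V : Matrix.unitaryGroup X ℂ) (M : Matrix X X ℂ) :
    mexp ((V : Matrix X X ℂ) * M * star (V : Matrix X X ℂ))
      = (V : Matrix X X ℂ) * mexp M * star (V : Matrix X X ℂ) := by
  rw [mexp, mexp, ← unitary_inv_eq_star V]
  exact Matrix.exp_conj _ _ (unitary_isUnit V)

lemma mexp_diag_real (μ : X → ℝ) :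
    mexp (Matrix.diagonal (fun i => (μ i : ℂ)))
      = Matrix.diagonal (fun i => ((Real.exp (μ i) : ℝ) : ℂ)) := by
  have h : NormedSpace.exp (Matrix.diagonal (fun i => (μ i : ℂ)))
      = Matrix.diagonal (NormedSpace.exp (fun i => (μ i : ℂ))) := Matrix.exp_diagonal _
  rw [mexp, h, Pi.exp_def]
  refine congrArg Matrix.diagonal (funext fun i => ?_)
  rw [← Complex.exp_eq_exp_ℂ]
  exact (Complex.ofReal_exp _).symm

lemma opNorm_mexp_conj_diag_le (V : Matrix.unitaryGroup X ℂ) (μ : X → ℝ) (c : ℝ)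
    (h : ∀ i, μ i ≤ c) :
    opNorm (mexp ((V : Matrix X X ℂ) * Matrix.diagonal (fun i => (μ i : ℂ))
      * star (V : Matrix X X ℂ))) ≤ Real.exp c := by
  rw [mexp_conj, mexp_diag_real]
  apply opNorm_conj_diag_le _ _ _ (Real.exp_nonneg c)
  intro i
  rw [Complex.norm_real, Real.norm_eq_abs, abs_of_nonneg (Real.exp_nonneg _)]
  exact Real.exp_le_exp.mpr (h i)


lemma spectral_smul (r : ℝ) {M : Matrix X X ℂ} (hM : M.IsHermitian) :
    (r : ℂ) • M = (hM.eigenvectorUnitary : Matrix X X ℂ)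
      * Matrix.diagonal (fun i => ((r * hM.eigenvalues i : ℝ) : ℂ))
      * star (hM.eigenvectorUnitary : Matrix X X ℂ) := by
  have h0 : M = (hM.eigenvectorUnitary : Matrix X X ℂ)
      * Matrix.diagonal (fun i => ((hM.eigenvalues i : ℝ) : ℂ))
      * star (hM.eigenvectorUnitary : Matrix X X ℂ) := hM.spectral_theorem
  conv_lhs => rw [h0]
  rw [← smul_mul_assoc, ← mul_smul_comm]
  congr 2
  rw [← Matrix.diagonal_smul]
  refine congrArg Matrix.diagonal (funext fun i => ?_)
  rw [Pi.smul_apply, smul_eq_mul, ← Complex.ofReal_mul]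

lemma opNorm_mexp_smul_le (r : ℝ) {M : Matrix X X ℂ} (hM : M.IsHermitian) (c : ℝ)
    (h : ∀ i, r * hM.eigenvalues i ≤ c) :
    opNorm (mexp ((r : ℂ) • M)) ≤ Real.exp c := by
  rw [spectral_smul r hM]
  exact opNorm_mexp_conj_diag_le _ _ _ h

lemma spectral_mexp {M : Matrix X X ℂ} (hM : M.IsHermitian) :
    mexp M = (hM.eigenvectorUnitary : Matrix X X ℂ)
      * Matrix.diagonal (fun i => ((Real.exp (hM.eigenvalues i) : ℝ) : ℂ))
      * star (hM.eigenvectorUnitary : Matrix X X ℂ) := by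
  have h0 : M = (hM.eigenvectorUnitary : Matrix X X ℂ)
      * Matrix.diagonal (fun i => ((hM.eigenvalues i : ℝ) : ℂ))
      * star (hM.eigenvectorUnitary : Matrix X X ℂ) := hM.spectral_theorem
  conv_lhs => rw [h0]
  rw [mexp_conj, mexp_diag_real]

lemma opNorm_inv_one_add_mexp {M : Matrix X X ℂ} (hM : M.IsHermitian) :
    opNorm (1 + mexp M)⁻¹ ≤ 1 := by
  set V : Matrix X X ℂ := (hM.eigenvectorUnitary : Matrix X X ℂ) with hVdef
  have hVV : star V * V = 1 := (Unitary.mem_iff.mp hM.eigenvectorUnitary.2).1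
  have hVV' : V * star V = 1 := (Unitary.mem_iff.mp hM.eigenvectorUnitary.2).2
  have hone : (1 : Matrix X X ℂ) + mexp M
      = V * Matrix.diagonal (fun i => ((1 + Real.exp (hM.eigenvalues i) : ℝ) : ℂ)) * star V := by
    rw [spectral_mexp hM]
    have hd : Matrix.diagonal (fun i => ((1 + Real.exp (hM.eigenvalues i) : ℝ) : ℂ))
        = 1 + Matrix.diagonal (fun i => ((Real.exp (hM.eigenvalues i) : ℝ) : ℂ)) := by
      rw [← Matrix.diagonal_one, Matrix.diagonal_add]
      congr 1
      funext i
      push_cast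
      ring
    rw [hd, mul_add, add_mul, mul_one, hVV']
  have hpos : ∀ i, ((1 + Real.exp (hM.eigenvalues i) : ℝ) : ℂ) ≠ 0 := by
    intro i
    have : (0 : ℝ) < 1 + Real.exp (hM.eigenvalues i) := by positivity
    exact_mod_cast this.ne'
  have hinv : (1 + mexp M)⁻¹
      = V * Matrix.diagonal (fun i => (((1 + Real.exp (hM.eigenvalues i))⁻¹ : ℝ) : ℂ)) * star V := by
    apply Matrix.inv_eq_right_inv
    rw [hone]
    have h1 : star V * (V * (Matrix.diagonal
        (fun i => (((1 + Real.exp (hM.eigenvalues i))⁻¹ : ℝ) : ℂ)) * star V))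
        = Matrix.diagonal (fun i => (((1 + Real.exp (hM.eigenvalues i))⁻¹ : ℝ) : ℂ)) * star V := by
      rw [← mul_assoc, hVV, one_mul]
    simp only [mul_assoc]
    rw [h1, ← mul_assoc (Matrix.diagonal _) (Matrix.diagonal _), Matrix.diagonal_mul_diagonal]
    have h2 : (fun i => ((1 + Real.exp (hM.eigenvalues i) : ℝ) : ℂ)
        * (((1 + Real.exp (hM.eigenvalues i))⁻¹ : ℝ) : ℂ)) = fun _ => (1 : ℂ) := by
      funext i
      rw [← Complex.ofReal_mul]
      rw [mul_inv_cancel₀ (by positivity : (1 : ℝ) + Real.exp (hM.eigenvalues i) ≠ 0)]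
      norm_num
    rw [h2, Matrix.diagonal_one, one_mul]
    exact hVV'
  rw [hinv]
  apply opNorm_conj_diag_le _ _ _ zero_le_one
  intro i
  rw [Complex.norm_real, Real.norm_eq_abs, abs_of_nonneg (by positivity)]
  rw [inv_le_one_iff₀]
  right
  nlinarith [Real.exp_pos (hM.eigenvalues i)]

lemma star_mexp_I_smul {A : Matrix X X ℂ} (hA : A.IsHermitian) (s : ℝ) :
    star (mexp ((Complex.I * (s : ℂ)) • A)) * mexp ((Complex.I * (s : ℂ)) • A) = 1 := by
  have h1 : ((Complex.I * (s : ℂ)) • A)ᴴ = -((Complex.I * (s : ℂ)) • A) := by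
    rw [Matrix.conjTranspose_smul, hA.eq, ← neg_smul]
    congr 1
    simp [Complex.ext_iff]
  have h2 : (NormedSpace.exp ((Complex.I * (s : ℂ)) • A))ᴴ
      = NormedSpace.exp (-((Complex.I * (s : ℂ)) • A)) := by
    have := Matrix.exp_conjTranspose ((Complex.I * (s : ℂ)) • A)
    rw [h1] at this
    exact this.symm
  have h3 : NormedSpace.exp (-((Complex.I * (s : ℂ)) • A) + (Complex.I * (s : ℂ)) • A)
      = NormedSpace.exp (-((Complex.I * (s : ℂ)) • A))
        * NormedSpace.exp ((Complex.I * (s : ℂ)) • A) :=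
    Matrix.exp_add_of_commute _ _ ((Commute.refl _).neg_left)
  have h4 : star (mexp ((Complex.I * (s : ℂ)) • A)) = (NormedSpace.exp ((Complex.I * (s : ℂ)) • A))ᴴ := rfl
  have h5 : mexp ((Complex.I * (s : ℂ)) • A) = NormedSpace.exp ((Complex.I * (s : ℂ)) • A) := rfl
  rw [h4, h2, h5, ← h3, neg_add_cancel]
  exact NormedSpace.exp_zero

lemma opNorm_mexp_I_smul_le {A : Matrix X X ℂ} (hA : A.IsHermitian) (s : ℝ) :
    opNorm (mexp ((Complex.I * (s : ℂ)) • A)) ≤ 1 :=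
  opNorm_le_one_of_star_mul_self _ (star_mexp_I_smul hA s)



lemma opNorm_one_le : opNorm (1 : Matrix X X ℂ) ≤ 1 :=
  opNorm_le_one_of_star_mul_self _ (by simp)

lemma opNorm_prod5_le (M₁ M₂ M₃ M₄ M₅ : Matrix X X ℂ) (b₃ b₅ : ℝ)
    (h₁ : opNorm M₁ ≤ 1) (h₂ : opNorm M₂ ≤ 1) (h₃ : opNorm M₃ ≤ b₃)
    (h₄ : opNorm M₄ ≤ 1) (h₅ : opNorm M₅ ≤ b₅) (hb₃ : 0 ≤ b₃) (hb₅ : 0 ≤ b₅) :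
    opNorm (M₁ * M₂ * M₃ * M₄ * M₅) ≤ b₃ * b₅ := by
  have e4 := opNorm_mul_le M₁ M₂
  have e3 := opNorm_mul_le (M₁*M₂) M₃
  have e2 := opNorm_mul_le (M₁*M₂*M₃) M₄
  have e1 := opNorm_mul_le (M₁*M₂*M₃*M₄) M₅
  have n1 := opNorm_nonneg M₁
  have n2 := opNorm_nonneg M₂
  have n3 := opNorm_nonneg M₃
  have n4 := opNorm_nonneg M₄
  have n5 := opNorm_nonneg M₅
  have n12 := opNorm_nonneg (M₁*M₂)
  have n123 := opNorm_nonneg (M₁*M₂*M₃)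
  have n1234 := opNorm_nonneg (M₁*M₂*M₃*M₄)
  have h12 : opNorm (M₁*M₂) ≤ 1 := by nlinarith
  have h123 : opNorm (M₁*M₂*M₃) ≤ b₃ := by nlinarith
  have h1234 : opNorm (M₁*M₂*M₃*M₄) ≤ b₃ := by nlinarith
  nlinarith

lemma opNorm_prod4_le (M₁ M₂ M₄ M₅ : Matrix X X ℂ) (b₅ : ℝ)
    (h₁ : opNorm M₁ ≤ 1) (h₂ : opNorm M₂ ≤ 1)
    (h₄ : opNorm M₄ ≤ 1) (h₅ : opNorm M₅ ≤ b₅) (hb₅ : 0 ≤ b₅) :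
    opNorm (M₁ * M₂ * M₄ * M₅) ≤ b₅ := by
  have h0 : M₁ * M₂ * M₄ * M₅ = M₁ * M₂ * 1 * M₄ * M₅ := by rw [mul_one]
  rw [h0]
  have := opNorm_prod5_le M₁ M₂ 1 M₄ M₅ 1 b₅ h₁ h₂ opNorm_one_le h₄ h₅ zero_le_one hb₅
  linarith

end KeldyshAux

/-- Operator norm bounds for the blocks of the Keldysh covariance of a dissipative system
(`[A,B] = [A,Q] = [B,Q] = 0`, `B > 0`), in terms of the smallest eigenvalues `q̃` of `Q`
and `b̃` of `B`. Here `true` encodes the branch `+`, `false` encodes `−`. -/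
theorem opNorm_bounds_keldyshCovDiss
    {X : Type*} [Fintype X] [DecidableEq X] [Nonempty X]
    (β T : ℝ) (hβ : 0 < β) (hT : 0 < T)
    (A B Q : Matrix X X ℂ) (hA : A.IsHermitian) (hQ : Q.IsHermitian) (hB : B.PosDef)
    (hAB : Commute A B) (hAQ : Commute A Q) (hBQ : Commute B Q) :
    ∀ qt bt : ℝ, qt = ⨅ ℓ, hQ.eigenvalues ℓ → bt = ⨅ ℓ, hB.1.eigenvalues ℓ →
    ∀ t ∈ Set.Icc (0 : ℝ) T, ∀ t' ∈ Set.Icc (0 : ℝ) T,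
      (opNorm (keldyshCovDiss β T A B Q true false t t')
          ≤ Real.exp (-(β * qt)) * Real.exp (-((t + t') * bt))) ∧
      (opNorm (keldyshCovDiss β T A B Q false true t t')
          ≤ Real.exp ((-(2 * T) + t + t') * bt)) ∧
      (t < t' → opNorm (keldyshCovDiss β T A B Q true true t t')
          ≤ Real.exp (-(β * qt)) * Real.exp ((-(2 * T) + t' - t) * bt)) ∧
      (t' ≤ t → opNorm (keldyshCovDiss β T A B Q true true t t')
          ≤ Real.exp ((t' - t) * bt)) ∧
      (t' < t → opNorm (keldyshCovDiss β T A B Q false false t t')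
          ≤ Real.exp (-(β * qt)) * Real.exp ((-(2 * T) + t - t') * bt)) ∧
      (t ≤ t' → opNorm (keldyshCovDiss β T A B Q false false t t')
          ≤ Real.exp ((t - t') * bt)) := by
  intro qt bt hqt hbt t ht t' ht'
  obtain ⟨ht0, htT⟩ := ht
  obtain ⟨ht'0, ht'T⟩ := ht'
  have hqle : ∀ i, qt ≤ hQ.eigenvalues i := by
    intro i; rw [hqt]
    exact ciInf_le (Set.Finite.bddBelow (Set.finite_range _)) i
  have hble : ∀ i, bt ≤ hB.1.eigenvalues i := by
    intro i; rw [hbt]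
    exact ciInf_le (Set.Finite.bddBelow (Set.finite_range _)) i
  set f : Matrix X X ℂ := (1 + mexp ((-β : ℂ) • Q + ((-(2 * T) : ℝ) : ℂ) • B))⁻¹ with hf
  set E : ℝ → Matrix X X ℂ := fun s => mexp ((Complex.I * (s : ℂ)) • A) with hE
  set G : ℝ → Matrix X X ℂ := fun s => mexp (((s : ℝ) : ℂ) • B) with hG
  set eQ : Matrix X X ℂ := mexp ((-β : ℂ) • Q) with heQ
  have hEb : ∀ s : ℝ, opNorm (E s) ≤ 1 := fun s => KeldyshAux.opNorm_mexp_I_smul_le hA s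
  have hMherm : ((-β : ℂ) • Q + ((-(2 * T) : ℝ) : ℂ) • B).IsHermitian := by
    have hq : ((-β : ℂ) • Q).IsHermitian := by
      show ((-β : ℂ) • Q)ᴴ = (-β : ℂ) • Q
      rw [Matrix.conjTranspose_smul, hQ.eq]
      congr 1
      simp [Complex.conj_ofReal]
    have hb2 : (((-(2 * T) : ℝ) : ℂ) • B).IsHermitian := by
      show (((-(2 * T) : ℝ) : ℂ) • B)ᴴ = ((-(2 * T) : ℝ) : ℂ) • B
      rw [Matrix.conjTranspose_smul, hB.1.eq]
      congr 1
      simp [Complex.conj_ofReal]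
    exact hq.add hb2
  have hFb : opNorm f ≤ 1 := KeldyshAux.opNorm_inv_one_add_mexp hMherm
  have heQb : opNorm eQ ≤ Real.exp (-(β * qt)) := by
    have hcast : (-β : ℂ) • Q = ((-β : ℝ) : ℂ) • Q := by norm_cast
    rw [heQ, hcast]
    apply KeldyshAux.opNorm_mexp_smul_le (-β) hQ
    intro i
    have := hqle i
    nlinarith
  have hGb : ∀ s : ℝ, s ≤ 0 → opNorm (G s) ≤ Real.exp (s * bt) := by
    intro s hs
    apply KeldyshAux.opNorm_mexp_smul_le s hB.1
    intro i
    have := hble i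
    nlinarith
  refine ⟨?_, ?_, ?_, ?_, ?_, ?_⟩
  · -- (true, false)
    have hre : keldyshCovDiss β T A B Q true false t t'
        = -(E (-t) * f * eQ * E t' * G (-(t + t'))) := rfl
    rw [hre, KeldyshAux.opNorm_neg]
    have h5 := KeldyshAux.opNorm_prod5_le (E (-t)) f eQ (E t') (G (-(t + t')))
        (Real.exp (-(β * qt))) (Real.exp ((-(t + t')) * bt))
        (hEb _) hFb heQb (hEb _) (hGb _ (by linarith)) (Real.exp_nonneg _) (Real.exp_nonneg _)
    have hexp : (-(t + t')) * bt = -((t + t') * bt) := by ring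
    rw [hexp] at h5
    exact h5
  · -- (false, true)
    have hre : keldyshCovDiss β T A B Q false true t t'
        = E (-t) * f * E t' * G (-(2 * T) + t + t') := rfl
    rw [hre]
    exact KeldyshAux.opNorm_prod4_le _ _ _ _ _
        (hEb _) hFb (hEb _) (hGb _ (by linarith)) (Real.exp_nonneg _)
  · -- (true, true), t < t'
    intro h
    have hre : keldyshCovDiss β T A B Q true true t t'
        = (if t' ≤ t then (1 : ℂ) else 0) • (E (-t) * f * E t' * G (t' - t))
          - (if t < t' then (1 : ℂ) else 0) • (E (-t) * f * eQ * E t' * G (t' - t - 2 * T)) := rfl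
    rw [hre, if_neg (not_le.2 h), if_pos h, zero_smul, one_smul, zero_sub,
      KeldyshAux.opNorm_neg]
    have h5 := KeldyshAux.opNorm_prod5_le (E (-t)) f eQ (E t') (G (t' - t - 2 * T))
        (Real.exp (-(β * qt))) (Real.exp ((t' - t - 2 * T) * bt))
        (hEb _) hFb heQb (hEb _) (hGb _ (by linarith)) (Real.exp_nonneg _) (Real.exp_nonneg _)
    have hexp : (t' - t - 2 * T) * bt = (-(2 * T) + t' - t) * bt := by ring
    rw [hexp] at h5
    exact h5
  · -- (true, true), t' ≤ t
    intro h
    have hre : keldyshCovDiss β T A B Q true true t t'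
        = (if t' ≤ t then (1 : ℂ) else 0) • (E (-t) * f * E t' * G (t' - t))
          - (if t < t' then (1 : ℂ) else 0) • (E (-t) * f * eQ * E t' * G (t' - t - 2 * T)) := rfl
    rw [hre, if_pos h, if_neg (not_lt.2 h), one_smul, zero_smul, sub_zero]
    exact KeldyshAux.opNorm_prod4_le _ _ _ _ _
        (hEb _) hFb (hEb _) (hGb _ (by linarith)) (Real.exp_nonneg _)
  · -- (false, false), t' < t
    intro h
    have hre : keldyshCovDiss β T A B Q false false t t'
        = (if t ≤ t' then (1 : ℂ) else 0) • (E (-t) * f * E t' * G (t - t'))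
          - (if t' < t then (1 : ℂ) else 0) • (E (-t) * f * eQ * E t' * G (t - t' - 2 * T)) := rfl
    rw [hre, if_neg (not_le.2 h), if_pos h, zero_smul, one_smul, zero_sub,
      KeldyshAux.opNorm_neg]
    have h5 := KeldyshAux.opNorm_prod5_le (E (-t)) f eQ (E t') (G (t - t' - 2 * T))
        (Real.exp (-(β * qt))) (Real.exp ((t - t' - 2 * T) * bt))
        (hEb _) hFb heQb (hEb _) (hGb _ (by linarith)) (Real.exp_nonneg _) (Real.exp_nonneg _)
    have hexp : (t - t' - 2 * T) * bt = (-(2 * T) + t - t') * bt := by ring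
    rw [hexp] at h5
    exact h5
  · -- (false, false), t ≤ t'
    intro h
    have hre : keldyshCovDiss β T A B Q false false t t'
        = (if t ≤ t' then (1 : ℂ) else 0) • (E (-t) * f * E t' * G (t - t'))
          - (if t' < t then (1 : ℂ) else 0) • (E (-t) * f * eQ * E t' * G (t - t' - 2 * T)) := rfl
    rw [hre, if_pos h, if_neg (not_lt.2 h), one_smul, zero_smul, sub_zero]
    exact KeldyshAux.opNorm_prod4_le _ _ _ _ _
        (hEb _) hFb (hEb _) (hGb _ (by linarith)) (Real.exp_nonneg _)
end
end

section
/- Let X be a finite nonempty set, β > 0, T > 0, and let A, B, Q be pairwise commuting hermitian operators on ℂ^X with B positive definite. Set f = (I + exp(−βQ − 2TB))^{−1} and define the Keldysh covariance blocks C_{ρσ}(t,t') for t,t' ∈ [0,T] by: C_{−+}(t,t') = exp(−itA) f exp(it'A) exp((−2T+t+t')B); C_{+−}(t,t') = −exp(−itA) f exp(−βQ) exp(it'A) exp(−(t+t')B); C_{++}(t,t') = 1_{t≥t'} exp(−itA) f exp(it'A) exp((t'−t)B) − 1_{t<t'} exp(−itA) f exp(−βQ) exp(it'A) exp((t'−t−2T)B);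 C_{−−}(t,t') = 1_{t≤t'} exp(−itA) f exp(it'A) exp((t−t')B) − 1_{t>t'} exp(−itA) f exp(−βQ) exp(it'A) exp((t−t'−2T)B). Let q̃ and b̃ be the smallest eigenvalues of Q and B. Then for all x, y ∈ X: (i) sup_{t∈[0,T]} ∫₀^T |(C_{+−}(t,t'))_{x,y}| dt' ≤ e^{−βq̃} (1/b̃)(1 − e^{−Tb̃}); (ii) sup_{t∈[0,T]} ∫₀^T |(C_{−+}(t,t'))_{x,y}| dt' ≤ (1/b̃)(1 − e^{−Tb̃}); (iii) sup_{t∈[0,T]} ∫₀^T |(C_{++}(t,t'))_{x,y}| dt' ≤ (1 + e^{−βq̃})(1/b̃)(1 − e^{−Tb̃}); (iv) sup_{t'∈[0,T]} ∫₀^T |(C_{++}(t,t'))_{x,y}| dt ≤ (1 + e^{−βq̃})(1/b̃)(1 − e^{−Tb̃}). -/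
open MeasureTheory
open scoped BigOperators Matrix ComplexOrder

noncomputable section

section KeldyshHelpers

open Matrix
variable {X : Type*} [Fintype X] [DecidableEq X]

private lemma keldysh_mexp_smul_spectral {M : Matrix X X ℂ} (hM : M.IsHermitian) (c : ℂ) :
    mexp (c • M) = (hM.eigenvectorUnitary : Matrix X X ℂ) *
      Matrix.diagonal (fun ℓ => Complex.exp (c * hM.eigenvalues ℓ)) *
      star (hM.eigenvectorUnitary : Matrix X X ℂ) := by
  unfold mexp
  have hUinv : (hM.eigenvectorUnitary : Matrix X X ℂ)⁻¹ = star (hM.eigenvectorUnitary : Matrix X X ℂ) :=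
    Matrix.inv_eq_left_inv (Matrix.mem_unitaryGroup_iff'.mp hM.eigenvectorUnitary.2)
  have hUunit : IsUnit (hM.eigenvectorUnitary : Matrix X X ℂ) := ⟨Unitary.toUnits hM.eigenvectorUnitary, rfl⟩
  have h1 : c • M = (hM.eigenvectorUnitary : Matrix X X ℂ) *
      (Matrix.diagonal (fun ℓ => c * (hM.eigenvalues ℓ : ℂ))) * (hM.eigenvectorUnitary : Matrix X X ℂ)⁻¹ := by
    rw [hUinv]
    conv_lhs => rw [hM.spectral_theorem, Unitary.conjStarAlgAut_apply]
    rw [← smul_mul_assoc, ← mul_smul_comm]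
    congr 2
    ext i j
    by_cases h : i = j <;> simp [h, Matrix.diagonal_apply]
  have h2 := Matrix.exp_conj (hM.eigenvectorUnitary : Matrix X X ℂ)
      (Matrix.diagonal (fun ℓ => c * (hM.eigenvalues ℓ : ℂ))) hUunit
  rw [h1, h2, hUinv]
  congr 1
  rw [Matrix.exp_diagonal]
  congr 1
  rw [Pi.exp_def]
  funext i
  rw [Complex.exp_eq_exp_ℂ]

private lemma keldysh_conj_diag_mul {U : Matrix X X ℂ} (hU : U ∈ Matrix.unitaryGroup X ℂ) (a b : X → ℂ) :
    (U * Matrix.diagonal a * star U) * (U * Matrix.diagonal b * star U)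
      = U * Matrix.diagonal (fun i => a i * b i) * star U := by
  have hsUU : star U * U = 1 := Matrix.mem_unitaryGroup_iff'.mp hU
  simp only [mul_assoc]
  rw [show star U * (U * (Matrix.diagonal b * star U)) = Matrix.diagonal b * star U from by
    rw [← mul_assoc, hsUU, one_mul]]
  rw [show Matrix.diagonal a * (Matrix.diagonal b * star U) = Matrix.diagonal (fun i => a i * b i) * star U from by
    rw [← mul_assoc, Matrix.diagonal_mul_diagonal]]

private lemma keldysh_inv_one_add_mexp {H : Matrix X X ℂ} (hH : H.IsHermitian) :
    (1 + mexp H)⁻¹ = (hH.eigenvectorUnitary : Matrix X X ℂ) *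
      Matrix.diagonal (fun ℓ => (1 + Complex.exp (hH.eigenvalues ℓ))⁻¹) *
      star (hH.eigenvectorUnitary : Matrix X X ℂ) := by
  have hspec : mexp H = (hH.eigenvectorUnitary : Matrix X X ℂ) *
      Matrix.diagonal (fun ℓ => Complex.exp (hH.eigenvalues ℓ)) *
      star (hH.eigenvectorUnitary : Matrix X X ℂ) := by
    have := keldysh_mexp_smul_spectral hH 1
    simpa [one_smul, one_mul] using this
  set U : Matrix X X ℂ := (hH.eigenvectorUnitary : Matrix X X ℂ)
  have hUU : U * star U = 1 := Matrix.mem_unitaryGroup_iff.mp hH.eigenvectorUnitary.2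
  have hne : ∀ ℓ, (1 + Complex.exp (hH.eigenvalues ℓ)) ≠ 0 := by
    intro ℓ
    rw [← Complex.ofReal_exp, ← Complex.ofReal_one, ← Complex.ofReal_add]
    exact_mod_cast ne_of_gt (by positivity : (0:ℝ) < 1 + Real.exp (hH.eigenvalues ℓ))
  have h1 : 1 + mexp H = U * Matrix.diagonal (fun ℓ => 1 + Complex.exp (hH.eigenvalues ℓ)) * star U := by
    have hone : (1 : Matrix X X ℂ) = U * Matrix.diagonal (fun _ => (1:ℂ)) * star U := by
      rw [show Matrix.diagonal (fun _ => (1:ℂ)) = (1 : Matrix X X ℂ) from Matrix.diagonal_one, mul_one, hUU]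
    conv_lhs => rw [hone, hspec]
    rw [← add_mul, ← mul_add, ← Matrix.diagonal_add]
  rw [h1]
  apply Matrix.inv_eq_right_inv
  rw [keldysh_conj_diag_mul hH.eigenvectorUnitary.2]
  rw [show (fun i => (1 + Complex.exp (hH.eigenvalues i)) * (1 + Complex.exp (hH.eigenvalues i))⁻¹) = fun _ => (1:ℂ) from by
    funext ℓ; exact mul_inv_cancel₀ (hne ℓ)]
  rw [show Matrix.diagonal (fun _ => (1:ℂ)) = (1 : Matrix X X ℂ) from Matrix.diagonal_one, mul_one, hUU]

section L2Lemmas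
open scoped Matrix.Norms.L2Operator

set_option maxHeartbeats 1000000 in
private lemma keldysh_diag_norm_le (w : X → ℂ) {c : ℝ} (hc : 0 ≤ c) (h : ∀ i, ‖w i‖ ≤ c) :
    ‖Matrix.diagonal w‖ ≤ c := by
  rw [Matrix.l2_opNorm_def]
  apply ContinuousLinearMap.opNorm_le_bound _ hc
  intro x
  have he : ((Matrix.toEuclideanLin ≪≫ₗ LinearMap.toContinuousLinearMap) (Matrix.diagonal w)) x
      = Matrix.toEuclideanLin (Matrix.diagonal w) x := rfl
  rw [he, Matrix.toEuclideanLin_apply]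
  rw [EuclideanSpace.norm_eq]
  have hx : ‖x‖ = Real.sqrt (∑ i, ‖x i‖ ^ 2) := EuclideanSpace.norm_eq x
  rw [hx, ← Real.sqrt_sq hc, ← Real.sqrt_mul (by positivity)]
  apply Real.sqrt_le_sqrt
  rw [Finset.mul_sum]
  apply Finset.sum_le_sum
  intro i _
  have hdiag : (WithLp.toLp 2 (Matrix.diagonal w *ᵥ x.ofLp)).ofLp i
      = w i * ((WithLp.equiv 2 (X → ℂ)) x) i := by
    simp [Matrix.mulVec_diagonal]
  rw [hdiag, norm_mul, mul_pow]
  have hxi : ‖((WithLp.equiv 2 (X → ℂ)) x) i‖ = ‖x i‖ := rfl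
  rw [hxi]
  exact mul_le_mul_of_nonneg_right (pow_le_pow_left₀ (norm_nonneg _) (h i) 2) (by positivity)

private lemma keldysh_entry_le_norm (M : Matrix X X ℂ) (x y : X) : ‖M x y‖ ≤ ‖M‖ := by
  have h1 : ‖M x y‖ ≤ ‖(EuclideanSpace.equiv X ℂ).symm (M *ᵥ (WithLp.equiv 2 (X → ℂ)).symm (Pi.single y 1))‖ := by
    rw [EuclideanSpace.norm_eq]
    have h0 : ‖M x y‖ = Real.sqrt (‖M x y‖ ^ 2) := by
      rw [Real.sqrt_sq (norm_nonneg _)]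
    rw [h0]
    apply Real.sqrt_le_sqrt
    have hs := Finset.single_le_sum (f := fun i => ‖((EuclideanSpace.equiv X ℂ).symm (M *ᵥ (WithLp.equiv 2 (X → ℂ)).symm (Pi.single y 1))) i‖ ^ 2) (fun i _ => by positivity) (Finset.mem_univ x)
    refine le_trans (le_of_eq ?_) hs
    have h2 : ((EuclideanSpace.equiv X ℂ).symm (M *ᵥ (WithLp.equiv 2 (X → ℂ)).symm (Pi.single y 1))) x
        = M x y := by
      show (M *ᵥ Pi.single y 1) x = M x y
      simp [Matrix.mulVec_single]
    exact (congrArg (fun z => ‖z‖ ^ 2) h2).symm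
  refine h1.trans ?_
  calc ‖(EuclideanSpace.equiv X ℂ).symm (M *ᵥ (WithLp.equiv 2 (X → ℂ)).symm (Pi.single y 1))‖
      ≤ ‖M‖ * ‖(WithLp.equiv 2 (X → ℂ)).symm (Pi.single y 1)‖ := Matrix.l2_opNorm_mulVec M _
    _ = ‖M‖ := by
        have h3 : (WithLp.equiv 2 (X → ℂ)).symm (Pi.single y 1) = EuclideanSpace.single y (1:ℂ) := rfl
        rw [h3, EuclideanSpace.norm_single]
        simp

private lemma keldysh_norm_unitary [Nonempty X] {U : Matrix X X ℂ} (hU : U ∈ Matrix.unitaryGroup X ℂ) :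
    ‖U‖ = 1 :=
  CStarRing.norm_coe_unitary (⟨U, hU⟩ : unitary (Matrix X X ℂ))

private lemma keldysh_norm_conj_diag_le [Nonempty X] {U : Matrix X X ℂ} (hU : U ∈ Matrix.unitaryGroup X ℂ)
    (w : X → ℂ) {c : ℝ} (hc : 0 ≤ c) (h : ∀ i, ‖w i‖ ≤ c) :
    ‖U * Matrix.diagonal w * star U‖ ≤ c := by
  calc ‖U * Matrix.diagonal w * star U‖ ≤ ‖U * Matrix.diagonal w‖ * ‖star U‖ := norm_mul_le _ _
    _ ≤ ‖U‖ * ‖Matrix.diagonal w‖ * ‖star U‖ :=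
        mul_le_mul_of_nonneg_right (norm_mul_le _ _) (norm_nonneg _)
    _ ≤ 1 * c * 1 := by
        rw [keldysh_norm_unitary hU, keldysh_norm_unitary (Unitary.star_mem hU)]
        exact mul_le_mul_of_nonneg_right (mul_le_mul_of_nonneg_left (keldysh_diag_norm_le w hc h) zero_le_one) zero_le_one
    _ = c := by ring

private lemma keldysh_abs_entry_conj4_le [Nonempty X] {U1 U2 U3 U4 : Matrix X X ℂ}
    {w1 w2 w3 w4 : X → ℂ} {c1 c2 c3 c4 : ℝ}
    (h1 : U1 ∈ Matrix.unitaryGroup X ℂ) (h2 : U2 ∈ Matrix.unitaryGroup X ℂ)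
    (h3 : U3 ∈ Matrix.unitaryGroup X ℂ) (h4 : U4 ∈ Matrix.unitaryGroup X ℂ)
    (hw1 : ∀ i, ‖w1 i‖ ≤ c1) (hw2 : ∀ i, ‖w2 i‖ ≤ c2)
    (hw3 : ∀ i, ‖w3 i‖ ≤ c3) (hw4 : ∀ i, ‖w4 i‖ ≤ c4)
    (hc1 : 0 ≤ c1) (hc2 : 0 ≤ c2) (hc3 : 0 ≤ c3) (hc4 : 0 ≤ c4) (x y : X) :
    ‖((U1 * Matrix.diagonal w1 * star U1) * (U2 * Matrix.diagonal w2 * star U2) *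
      (U3 * Matrix.diagonal w3 * star U3) * (U4 * Matrix.diagonal w4 * star U4)) x y‖
      ≤ c1 * c2 * c3 * c4 := by
  refine (keldysh_entry_le_norm _ x y).trans ?_
  have n1 := keldysh_norm_conj_diag_le h1 w1 hc1 hw1
  have n2 := keldysh_norm_conj_diag_le h2 w2 hc2 hw2
  have n3 := keldysh_norm_conj_diag_le h3 w3 hc3 hw3
  have n4 := keldysh_norm_conj_diag_le h4 w4 hc4 hw4
  have m12 : ‖(U1 * Matrix.diagonal w1 * star U1) * (U2 * Matrix.diagonal w2 * star U2)‖ ≤ c1 * c2 :=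
    le_trans (norm_mul_le _ _) (mul_le_mul n1 n2 (norm_nonneg _) hc1)
  have m123 : ‖(U1 * Matrix.diagonal w1 * star U1) * (U2 * Matrix.diagonal w2 * star U2) *
      (U3 * Matrix.diagonal w3 * star U3)‖ ≤ c1 * c2 * c3 :=
    le_trans (norm_mul_le _ _) (mul_le_mul m12 n3 (norm_nonneg _) (mul_nonneg hc1 hc2))
  exact le_trans (norm_mul_le _ _) (mul_le_mul m123 n4 (norm_nonneg _) (mul_nonneg (mul_nonneg hc1 hc2) hc3))

private lemma keldysh_abs_entry_conj5_le [Nonempty X] {U1 U2 U3 U4 U5 : Matrix X X ℂ}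
    {w1 w2 w3 w4 w5 : X → ℂ} {c1 c2 c3 c4 c5 : ℝ}
    (h1 : U1 ∈ Matrix.unitaryGroup X ℂ) (h2 : U2 ∈ Matrix.unitaryGroup X ℂ)
    (h3 : U3 ∈ Matrix.unitaryGroup X ℂ) (h4 : U4 ∈ Matrix.unitaryGroup X ℂ)
    (h5 : U5 ∈ Matrix.unitaryGroup X ℂ)
    (hw1 : ∀ i, ‖w1 i‖ ≤ c1) (hw2 : ∀ i, ‖w2 i‖ ≤ c2)
    (hw3 : ∀ i, ‖w3 i‖ ≤ c3) (hw4 : ∀ i, ‖w4 i‖ ≤ c4)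
    (hw5 : ∀ i, ‖w5 i‖ ≤ c5)
    (hc1 : 0 ≤ c1) (hc2 : 0 ≤ c2) (hc3 : 0 ≤ c3) (hc4 : 0 ≤ c4) (hc5 : 0 ≤ c5) (x y : X) :
    ‖((U1 * Matrix.diagonal w1 * star U1) * (U2 * Matrix.diagonal w2 * star U2) *
      (U3 * Matrix.diagonal w3 * star U3) * (U4 * Matrix.diagonal w4 * star U4) *
      (U5 * Matrix.diagonal w5 * star U5)) x y‖
      ≤ c1 * c2 * c3 * c4 * c5 := by
  refine (keldysh_entry_le_norm _ x y).trans ?_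
  have n1 := keldysh_norm_conj_diag_le h1 w1 hc1 hw1
  have n2 := keldysh_norm_conj_diag_le h2 w2 hc2 hw2
  have n3 := keldysh_norm_conj_diag_le h3 w3 hc3 hw3
  have n4 := keldysh_norm_conj_diag_le h4 w4 hc4 hw4
  have n5 := keldysh_norm_conj_diag_le h5 w5 hc5 hw5
  have m12 : ‖(U1 * Matrix.diagonal w1 * star U1) * (U2 * Matrix.diagonal w2 * star U2)‖ ≤ c1 * c2 :=
    le_trans (norm_mul_le _ _) (mul_le_mul n1 n2 (norm_nonneg _) hc1)
  have m123 : ‖(U1 * Matrix.diagonal w1 * star U1) * (U2 * Matrix.diagonal w2 * star U2) *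
      (U3 * Matrix.diagonal w3 * star U3)‖ ≤ c1 * c2 * c3 :=
    le_trans (norm_mul_le _ _) (mul_le_mul m12 n3 (norm_nonneg _) (mul_nonneg hc1 hc2))
  have m1234 : ‖(U1 * Matrix.diagonal w1 * star U1) * (U2 * Matrix.diagonal w2 * star U2) *
      (U3 * Matrix.diagonal w3 * star U3) * (U4 * Matrix.diagonal w4 * star U4)‖ ≤ c1 * c2 * c3 * c4 :=
    le_trans (norm_mul_le _ _) (mul_le_mul m123 n4 (norm_nonneg _) (mul_nonneg (mul_nonneg hc1 hc2) hc3))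
  exact le_trans (norm_mul_le _ _) (mul_le_mul m1234 n5 (norm_nonneg _)
    (mul_nonneg (mul_nonneg (mul_nonneg hc1 hc2) hc3) hc4))

end L2Lemmas

private lemma keldysh_expInt_integrableOn (c d : ℝ) (u v : ℝ) :
    MeasureTheory.IntegrableOn (fun x => Real.exp (c * x + d)) (Set.Icc u v) :=
  (Real.continuous_exp.comp (by continuity)).integrableOn_Icc

private lemma keldysh_expInt (c d u v : ℝ) (hc : c ≠ 0) (huv : u ≤ v) :
    ∫ s in Set.Icc u v, Real.exp (c * s + d)
      = (Real.exp (c * v + d) - Real.exp (c * u + d)) / c := by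
  rw [MeasureTheory.integral_Icc_eq_integral_Ioc, ← intervalIntegral.integral_of_le huv]
  have hder : ∀ s : ℝ, HasDerivAt (fun x => Real.exp (c * x + d) / c) (Real.exp (c * s + d)) s := by
    intro s
    have h1 : HasDerivAt (fun x : ℝ => c * x + d) c s := by
      simpa using ((hasDerivAt_id s).const_mul c).add_const d
    have h3 := h1.exp.div_const c
    simpa [mul_div_assoc, mul_div_cancel_right₀, hc] using h3
  rw [intervalIntegral.integral_eq_sub_of_hasDerivAt (fun s _ => hder s)
    ((Real.continuous_exp.comp (by continuity)).intervalIntegrable u v)]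
  ring

end KeldyshHelpers

/-- Time-integral bounds on the matrix entries of the Keldysh covariance of a dissipative
system (`[A,B] = [A,Q] = [B,Q] = 0`, `B > 0`), in terms of the smallest eigenvalues `q̃` of
`Q` and `b̃` of `B`. Here `true` encodes the branch `+`, `false` encodes `−`.
The supremum over `t ∈ [0,T]` is expressed as a bound for every such `t`. -/
theorem integral_entry_bounds_keldyshCovDiss
    {X : Type*} [Fintype X] [DecidableEq X] [Nonempty X]
    (β T : ℝ) (hβ : 0 < β) (hT : 0 < T)
    (A B Q : Matrix X X ℂ) (hA : A.IsHermitian) (hQ : Q.IsHermitian) (hB : B.PosDef)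
    (hAB : Commute A B) (hAQ : Commute A Q) (hBQ : Commute B Q) :
    ∀ qt bt : ℝ, qt = ⨅ ℓ, hQ.eigenvalues ℓ → bt = ⨅ ℓ, hB.1.eigenvalues ℓ →
    ∀ x y : X,
      (∀ t ∈ Set.Icc (0 : ℝ) T,
        (∫ t' in Set.Icc (0 : ℝ) T,
            ‖(keldyshCovDiss β T A B Q true false t t') x y‖)
          ≤ Real.exp (-(β * qt)) * (1 / bt) * (1 - Real.exp (-(T * bt)))) ∧
      (∀ t ∈ Set.Icc (0 : ℝ) T,
        (∫ t' in Set.Icc (0 : ℝ) T,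
            ‖(keldyshCovDiss β T A B Q false true t t') x y‖)
          ≤ (1 / bt) * (1 - Real.exp (-(T * bt)))) ∧
      (∀ t ∈ Set.Icc (0 : ℝ) T,
        (∫ t' in Set.Icc (0 : ℝ) T,
            ‖(keldyshCovDiss β T A B Q true true t t') x y‖)
          ≤ (1 + Real.exp (-(β * qt))) * (1 / bt) * (1 - Real.exp (-(T * bt)))) ∧
      (∀ t' ∈ Set.Icc (0 : ℝ) T,
        (∫ t in Set.Icc (0 : ℝ) T,
            ‖(keldyshCovDiss β T A B Q true true t t') x y‖)
          ≤ (1 + Real.exp (-(β * qt))) * (1 / bt) * (1 - Real.exp (-(T * bt)))) := by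
  intro qt bt hqt hbt x y
  have hqle : ∀ ℓ, qt ≤ hQ.eigenvalues ℓ := fun ℓ => by
    rw [hqt]; exact ciInf_le (Finite.bddBelow_range _) ℓ
  have hble : ∀ ℓ, bt ≤ hB.1.eigenvalues ℓ := fun ℓ => by
    rw [hbt]; exact ciInf_le (Finite.bddBelow_range _) ℓ
  have hbt0 : 0 < bt := by
    obtain ⟨ℓ0, hℓ0⟩ := exists_eq_ciInf_of_finite (f := hB.1.eigenvalues)
    rw [hbt, ← hℓ0]; exact hB.eigenvalues_pos ℓ0
  have hbne : bt ≠ 0 := ne_of_gt hbt0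
  have hHQ : Matrix.IsHermitian ((-β : ℂ) • Q) := by
    show _ᴴ = _
    rw [Matrix.conjTranspose_smul, hQ.eq]
    congr 1
    simp
  have hHB : Matrix.IsHermitian (((-(2 * T) : ℝ) : ℂ) • B) := by
    show _ᴴ = _
    rw [Matrix.conjTranspose_smul, hB.1.eq]
    congr 1
    simp
  have hH : Matrix.IsHermitian ((-β : ℂ) • Q + ((-(2 * T) : ℝ) : ℂ) • B) := hHQ.add hHB
  -- diag entry bounds
  have hwE : ∀ (s : ℝ) (ℓ : X),
      ‖Complex.exp (Complex.I * (s : ℂ) * (hA.eigenvalues ℓ : ℂ))‖ ≤ 1 := by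
    intro s ℓ
    rw [Complex.norm_exp]
    simp [Complex.mul_re]
  have hwf : ∀ ℓ : X, ‖(1 + Complex.exp ((hH.eigenvalues ℓ : ℝ) : ℂ))⁻¹‖ ≤ 1 := by
    intro ℓ
    rw [norm_inv, ← Complex.ofReal_exp, ← Complex.ofReal_one, ← Complex.ofReal_add,
      Complex.norm_real, Real.norm_eq_abs, abs_of_pos (by positivity)]
    rw [inv_le_one_iff₀]
    right
    nlinarith [Real.exp_pos (hH.eigenvalues ℓ)]
  have hwQ : ∀ ℓ : X, ‖Complex.exp (-(β : ℂ) * (hQ.eigenvalues ℓ : ℂ))‖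
      ≤ Real.exp (-(β * qt)) := by
    intro ℓ
    rw [show -(β : ℂ) * (hQ.eigenvalues ℓ : ℂ) = ((-(β * hQ.eigenvalues ℓ) : ℝ) : ℂ) from by
      push_cast; ring]
    rw [Complex.norm_exp, Complex.ofReal_re]
    apply Real.exp_le_exp.mpr
    have := mul_le_mul_of_nonneg_left (hqle ℓ) hβ.le
    linarith
  have hwG : ∀ s : ℝ, s ≤ 0 → ∀ ℓ : X,
      ‖Complex.exp ((s : ℂ) * (hB.1.eigenvalues ℓ : ℂ))‖ ≤ Real.exp (s * bt) := by
    intro s hs ℓ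
    rw [show (s : ℂ) * (hB.1.eigenvalues ℓ : ℂ) = ((s * hB.1.eigenvalues ℓ : ℝ) : ℂ) from by
      push_cast; ring]
    rw [Complex.norm_exp, Complex.ofReal_re]
    exact Real.exp_le_exp.mpr (mul_le_mul_of_nonpos_left (hble ℓ) hs)
  -- core entry bounds
  have core4 : ∀ u v s : ℝ, s ≤ 0 →
      ‖(mexp ((Complex.I * (u : ℂ)) • A) *
        (1 + mexp ((-β : ℂ) • Q + ((-(2 * T) : ℝ) : ℂ) • B))⁻¹ *
        mexp ((Complex.I * (v : ℂ)) • A) * mexp (((s : ℝ) : ℂ) • B)) x y‖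
      ≤ Real.exp (s * bt) := by
    intro u v s hs
    rw [keldysh_inv_one_add_mexp hH]
    simp only [keldysh_mexp_smul_spectral hA, keldysh_mexp_smul_spectral hB.1]
    refine le_trans (keldysh_abs_entry_conj4_le hA.eigenvectorUnitary.2 hH.eigenvectorUnitary.2
      hA.eigenvectorUnitary.2 hB.1.eigenvectorUnitary.2
      (hwE u) hwf (hwE v) (hwG s hs) zero_le_one zero_le_one zero_le_one
      (Real.exp_pos _).le x y) ?_
    simp
  have core5 : ∀ u v s : ℝ, s ≤ 0 →
      ‖(mexp ((Complex.I * (u : ℂ)) • A) *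
        (1 + mexp ((-β : ℂ) • Q + ((-(2 * T) : ℝ) : ℂ) • B))⁻¹ *
        mexp ((-β : ℂ) • Q) *
        mexp ((Complex.I * (v : ℂ)) • A) * mexp (((s : ℝ) : ℂ) • B)) x y‖
      ≤ Real.exp (-(β * qt)) * Real.exp (s * bt) := by
    intro u v s hs
    rw [keldysh_inv_one_add_mexp hH]
    simp only [keldysh_mexp_smul_spectral hA, keldysh_mexp_smul_spectral hB.1,
      keldysh_mexp_smul_spectral hQ]
    refine le_trans (keldysh_abs_entry_conj5_le hA.eigenvectorUnitary.2 hH.eigenvectorUnitary.2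
      hQ.eigenvectorUnitary.2 hA.eigenvectorUnitary.2 hB.1.eigenvectorUnitary.2
      (hwE u) hwf hwQ (hwE v) (hwG s hs) zero_le_one zero_le_one (Real.exp_pos _).le
      zero_le_one (Real.exp_pos _).le x y) ?_
    simp
  -- pointwise bounds per branch
  have pt_tf : ∀ t t' : ℝ, 0 ≤ t → 0 ≤ t' →
      ‖(keldyshCovDiss β T A B Q true false t t') x y‖
        ≤ Real.exp (-(β * qt)) * Real.exp ((-bt) * t' + (-(bt * t))) := by
    intro t t' ht ht'
    simp only [keldyshCovDiss]
    rw [Matrix.neg_apply, norm_neg]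
    refine le_trans (core5 (-t) t' (-(t + t')) (by linarith)) (le_of_eq ?_)
    congr 1
    ring
  have pt_ft : ∀ t t' : ℝ, t ≤ T → t' ≤ T →
      ‖(keldyshCovDiss β T A B Q false true t t') x y‖
        ≤ Real.exp (bt * t' + (bt * t - 2 * T * bt)) := by
    intro t t' ht ht'
    simp only [keldyshCovDiss]
    refine le_trans (core4 (-t) t' (-(2 * T) + t + t') (by linarith)) (le_of_eq ?_)
    congr 1
    ring
  have pt_tt : ∀ t t' : ℝ, 0 ≤ t → t ≤ T → 0 ≤ t' → t' ≤ T →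
      ‖(keldyshCovDiss β T A B Q true true t t') x y‖
        ≤ (if t' ≤ t then Real.exp (bt * t' + (-(bt * t)))
            else Real.exp (-(β * qt)) * Real.exp (bt * t' + (-(bt * t) - 2 * T * bt))) := by
    intro t t' ht0 htT ht'0 ht'T
    simp only [keldyshCovDiss]
    by_cases h : t' ≤ t
    · rw [if_pos h, if_pos h, if_neg (not_lt.mpr h)]
      simp only [one_smul, zero_smul, sub_zero]
      refine le_trans (core4 (-t) t' (t' - t) (by linarith)) (le_of_eq ?_)
      congr 1
      ring
    · rw [if_neg h, if_neg h, if_pos (not_le.mp h)]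
      simp only [one_smul, zero_smul, zero_sub]
      rw [Matrix.neg_apply, norm_neg]
      refine le_trans (core5 (-t) t' (t' - t - 2 * T) (by linarith)) (le_of_eq ?_)
      congr 2
      ring
  -- abbreviation for the exp at -T*bt
  have hp1 : Real.exp (-(T * bt)) ≤ 1 := Real.exp_le_one_iff.mpr (by nlinarith)
  have hp0 : 0 < Real.exp (-(T * bt)) := Real.exp_pos _
  refine ⟨?_, ?_, ?_, ?_⟩
  -- Case (+,-)
  · intro t ht
    calc (∫ t' in Set.Icc (0 : ℝ) T,
            ‖(keldyshCovDiss β T A B Q true false t t') x y‖)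
        ≤ ∫ t' in Set.Icc (0 : ℝ) T,
            Real.exp (-(β * qt)) * Real.exp ((-bt) * t' + (-(bt * t))) := by
          refine integral_mono_of_nonneg (ae_of_all _ fun _ => norm_nonneg _)
            ((keldysh_expInt_integrableOn (-bt) (-(bt * t)) 0 T).const_mul _) ?_
          exact (ae_restrict_iff' measurableSet_Icc).mpr
            (ae_of_all _ fun t' ht' => pt_tf t t' ht.1 ht'.1)
      _ = Real.exp (-(β * qt)) *
            ((Real.exp ((-bt) * T + (-(bt * t))) - Real.exp ((-bt) * 0 + (-(bt * t)))) / (-bt)) := by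
          rw [MeasureTheory.integral_const_mul,
            keldysh_expInt (-bt) (-(bt * t)) 0 T (neg_ne_zero.mpr hbne) hT.le]
      _ ≤ Real.exp (-(β * qt)) * ((1 / bt) * (1 - Real.exp (-(T * bt)))) := by
          refine mul_le_mul_of_nonneg_left ?_ (Real.exp_pos _).le
          have he : (Real.exp ((-bt) * T + (-(bt * t))) - Real.exp ((-bt) * 0 + (-(bt * t)))) / (-bt)
              = (Real.exp ((-bt) * 0 + (-(bt * t))) - Real.exp ((-bt) * T + (-(bt * t)))) / bt := by
            rw [div_neg, ← neg_div, neg_sub]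
          rw [he, one_div_mul_eq_div]
          rw [div_le_div_iff_of_pos_right hbt0]
          have e1 : (-bt) * 0 + (-(bt * t)) = -(bt * t) := by ring
          have e2 : (-bt) * T + (-(bt * t)) = -(bt * t) + -(T * bt) := by ring
          rw [e1, e2, Real.exp_add]
          have ha1 : Real.exp (-(bt * t)) ≤ 1 := Real.exp_le_one_iff.mpr (by nlinarith [ht.1])
          nlinarith [Real.exp_pos (-(bt * t)),
            mul_le_mul_of_nonneg_right ha1 hp0.le]
      _ = Real.exp (-(β * qt)) * (1 / bt) * (1 - Real.exp (-(T * bt))) := by ring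
  -- Case (-,+)
  · intro t ht
    calc (∫ t' in Set.Icc (0 : ℝ) T,
            ‖(keldyshCovDiss β T A B Q false true t t') x y‖)
        ≤ ∫ t' in Set.Icc (0 : ℝ) T, Real.exp (bt * t' + (bt * t - 2 * T * bt)) := by
          refine integral_mono_of_nonneg (ae_of_all _ fun _ => norm_nonneg _)
            (keldysh_expInt_integrableOn bt (bt * t - 2 * T * bt) 0 T) ?_
          exact (ae_restrict_iff' measurableSet_Icc).mpr
            (ae_of_all _ fun t' ht' => pt_ft t t' ht.2 ht'.2)
      _ = (Real.exp (bt * T + (bt * t - 2 * T * bt))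
            - Real.exp (bt * 0 + (bt * t - 2 * T * bt))) / bt :=
          keldysh_expInt bt (bt * t - 2 * T * bt) 0 T hbne hT.le
      _ ≤ (1 / bt) * (1 - Real.exp (-(T * bt))) := by
          rw [one_div_mul_eq_div, div_le_div_iff_of_pos_right hbt0]
          have e1 : bt * T + (bt * t - 2 * T * bt) = (bt * t - T * bt) := by ring
          have e2 : bt * 0 + (bt * t - 2 * T * bt) = (bt * t - T * bt) + -(T * bt) := by ring
          rw [e1, e2, Real.exp_add]
          have ha1 : Real.exp (bt * t - T * bt) ≤ 1 := Real.exp_le_one_iff.mpr (by nlinarith [ht.2])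
          nlinarith [Real.exp_pos (bt * t - T * bt),
            mul_le_mul_of_nonneg_right ha1 hp0.le]
  -- Case (+,+), integral over t'
  · intro t ht
    set D : ℝ → ℝ := fun t' => if t' ≤ t then Real.exp (bt * t' + (-(bt * t)))
        else Real.exp (-(β * qt)) * Real.exp (bt * t' + (-(bt * t) - 2 * T * bt)) with hD
    have hint1 : MeasureTheory.IntegrableOn D (Set.Icc 0 t) :=
      (keldysh_expInt_integrableOn bt (-(bt * t)) 0 t).congr_fun
        (fun s hs => by simp only [hD]; exact (if_pos hs.2).symm) measurableSet_Icc
    have hint2 : MeasureTheory.IntegrableOn D (Set.Ioc t T) := by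
      have hbase : MeasureTheory.IntegrableOn
          (fun s => Real.exp (-(β * qt)) * Real.exp (bt * s + (-(bt * t) - 2 * T * bt)))
          (Set.Icc t T) :=
        (keldysh_expInt_integrableOn bt (-(bt * t) - 2 * T * bt) t T).const_mul _
      exact (hbase.mono_set Set.Ioc_subset_Icc_self).congr_fun
        (fun s hs => by simp only [hD]; exact (if_neg (not_le.mpr hs.1)).symm) measurableSet_Ioc
    have hdisj : Disjoint (Set.Icc (0:ℝ) t) (Set.Ioc t T) :=
      Set.disjoint_left.mpr fun a ha ha' => absurd ha.2 (not_le.mpr ha'.1)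
    have hunion : Set.Icc (0:ℝ) t ∪ Set.Ioc t T = Set.Icc (0:ℝ) T :=
      Set.Icc_union_Ioc_eq_Icc ht.1 ht.2
    have hintD : MeasureTheory.IntegrableOn D (Set.Icc (0:ℝ) T) := by
      rw [← hunion]; exact hint1.union hint2
    calc (∫ t' in Set.Icc (0 : ℝ) T,
            ‖(keldyshCovDiss β T A B Q true true t t') x y‖)
        ≤ ∫ t' in Set.Icc (0 : ℝ) T, D t' := by
          refine integral_mono_of_nonneg (ae_of_all _ fun _ => norm_nonneg _) hintD ?_
          exact (ae_restrict_iff' measurableSet_Icc).mpr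
            (ae_of_all _ fun t' ht' => pt_tt t t' ht.1 ht.2 ht'.1 ht'.2)
      _ = (∫ t' in Set.Icc (0:ℝ) t, D t') + ∫ t' in Set.Ioc t T, D t' := by
          rw [← hunion, MeasureTheory.setIntegral_union hdisj measurableSet_Ioc hint1 hint2]
      _ ≤ (1 / bt) * (1 - Real.exp (-(T * bt)))
            + Real.exp (-(β * qt)) * ((1 / bt) * (1 - Real.exp (-(T * bt)))) := by
          have hpart1 : (∫ t' in Set.Icc (0:ℝ) t, D t')
              ≤ (1 / bt) * (1 - Real.exp (-(T * bt))) := by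
            rw [MeasureTheory.setIntegral_congr_fun measurableSet_Icc
              (fun s hs => by simp only [hD]; exact if_pos hs.2)]
            rw [keldysh_expInt bt (-(bt * t)) 0 t hbne ht.1]
            rw [one_div_mul_eq_div, div_le_div_iff_of_pos_right hbt0]
            have e1 : bt * t + (-(bt * t)) = 0 := by ring
            rw [e1, Real.exp_zero]
            have ha1 : Real.exp (-(T * bt)) ≤ Real.exp (bt * 0 + (-(bt * t))) := by
              apply Real.exp_le_exp.mpr
              nlinarith [ht.2]
            linarith
          have hpart2 : (∫ t' in Set.Ioc t T, D t')
              ≤ Real.exp (-(β * qt)) * ((1 / bt) * (1 - Real.exp (-(T * bt)))) := by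
            rw [MeasureTheory.setIntegral_congr_fun measurableSet_Ioc
              (fun s hs => by simp only [hD]; exact if_neg (not_le.mpr hs.1))]
            rw [← MeasureTheory.integral_Icc_eq_integral_Ioc, MeasureTheory.integral_const_mul,
              keldysh_expInt bt (-(bt * t) - 2 * T * bt) t T hbne ht.2]
            refine mul_le_mul_of_nonneg_left ?_ (Real.exp_pos _).le
            rw [one_div_mul_eq_div, div_le_div_iff_of_pos_right hbt0]
            have e1 : bt * T + (-(bt * t) - 2 * T * bt) = -(bt * t) + -(T * bt) := by ring
            have e2 : bt * t + (-(bt * t) - 2 * T * bt) = -(T * bt) + -(T * bt) := by ring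
            rw [e1, e2, Real.exp_add, Real.exp_add]
            have ha1 : Real.exp (-(bt * t)) ≤ 1 := Real.exp_le_one_iff.mpr (by nlinarith [ht.1])
            nlinarith [Real.exp_pos (-(bt * t)), sq_nonneg (1 - Real.exp (-(T * bt))),
              mul_le_mul_of_nonneg_right ha1 hp0.le]
          linarith
      _ = (1 + Real.exp (-(β * qt))) * (1 / bt) * (1 - Real.exp (-(T * bt))) := by ring
  -- Case (+,+), integral over t
  · intro t' ht'
    set D : ℝ → ℝ := fun t => if t' ≤ t then Real.exp ((-bt) * t + bt * t')
        else Real.exp (-(β * qt)) * Real.exp ((-bt) * t + (bt * t' - 2 * T * bt)) with hD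
    have hpt : ∀ t ∈ Set.Icc (0:ℝ) T,
        ‖(keldyshCovDiss β T A B Q true true t t') x y‖ ≤ D t := by
      intro t ht
      refine le_trans (pt_tt t t' ht.1 ht.2 ht'.1 ht'.2) (le_of_eq ?_)
      simp only [hD]
      by_cases h : t' ≤ t
      · rw [if_pos h, if_pos h]
        congr 1
        ring
      · rw [if_neg h, if_neg h]
        congr 2
        ring
    have hint1 : MeasureTheory.IntegrableOn D (Set.Ico 0 t') := by
      have hbase : MeasureTheory.IntegrableOn
          (fun s => Real.exp (-(β * qt)) * Real.exp ((-bt) * s + (bt * t' - 2 * T * bt)))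
          (Set.Icc 0 t') :=
        (keldysh_expInt_integrableOn (-bt) (bt * t' - 2 * T * bt) 0 t').const_mul _
      exact (hbase.mono_set Set.Ico_subset_Icc_self).congr_fun
        (fun s hs => by simp only [hD]; exact (if_neg (not_le.mpr hs.2)).symm) measurableSet_Ico
    have hint2 : MeasureTheory.IntegrableOn D (Set.Icc t' T) :=
      (keldysh_expInt_integrableOn (-bt) (bt * t') t' T).congr_fun
        (fun s hs => by simp only [hD]; exact (if_pos hs.1).symm) measurableSet_Icc
    have hdisj : Disjoint (Set.Ico (0:ℝ) t') (Set.Icc t' T) :=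
      Set.disjoint_left.mpr fun a ha ha' => absurd ha'.1 (not_le.mpr ha.2)
    have hunion : Set.Ico (0:ℝ) t' ∪ Set.Icc t' T = Set.Icc (0:ℝ) T :=
      Set.Ico_union_Icc_eq_Icc ht'.1 ht'.2
    have hintD : MeasureTheory.IntegrableOn D (Set.Icc (0:ℝ) T) := by
      rw [← hunion]; exact hint1.union hint2
    calc (∫ t in Set.Icc (0 : ℝ) T,
            ‖(keldyshCovDiss β T A B Q true true t t') x y‖)
        ≤ ∫ t in Set.Icc (0 : ℝ) T, D t := by
          refine integral_mono_of_nonneg (ae_of_all _ fun _ => norm_nonneg _) hintD ?_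
          exact (ae_restrict_iff' measurableSet_Icc).mpr (ae_of_all _ hpt)
      _ = (∫ t in Set.Ico (0:ℝ) t', D t) + ∫ t in Set.Icc t' T, D t := by
          rw [← hunion, MeasureTheory.setIntegral_union hdisj measurableSet_Icc hint1 hint2]
      _ ≤ Real.exp (-(β * qt)) * ((1 / bt) * (1 - Real.exp (-(T * bt))))
            + (1 / bt) * (1 - Real.exp (-(T * bt))) := by
          have hpart1 : (∫ t in Set.Ico (0:ℝ) t', D t)
              ≤ Real.exp (-(β * qt)) * ((1 / bt) * (1 - Real.exp (-(T * bt)))) := by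
            rw [MeasureTheory.setIntegral_congr_fun measurableSet_Ico
              (fun s hs => by simp only [hD]; exact if_neg (not_le.mpr hs.2))]
            rw [← MeasureTheory.integral_Icc_eq_integral_Ico, MeasureTheory.integral_const_mul,
              keldysh_expInt (-bt) (bt * t' - 2 * T * bt) 0 t' (neg_ne_zero.mpr hbne) ht'.1]
            refine mul_le_mul_of_nonneg_left ?_ (Real.exp_pos _).le
            have he : (Real.exp ((-bt) * t' + (bt * t' - 2 * T * bt))
                - Real.exp ((-bt) * 0 + (bt * t' - 2 * T * bt))) / (-bt)
                = (Real.exp ((-bt) * 0 + (bt * t' - 2 * T * bt))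
                  - Real.exp ((-bt) * t' + (bt * t' - 2 * T * bt))) / bt := by
              rw [div_neg, ← neg_div, neg_sub]
            rw [he, one_div_mul_eq_div, div_le_div_iff_of_pos_right hbt0]
            have e1 : (-bt) * 0 + (bt * t' - 2 * T * bt) = (bt * t' - T * bt) + -(T * bt) := by ring
            have e2 : (-bt) * t' + (bt * t' - 2 * T * bt) = -(T * bt) + -(T * bt) := by ring
            rw [e1, e2, Real.exp_add, Real.exp_add]
            have ha1 : Real.exp (bt * t' - T * bt) ≤ 1 :=
              Real.exp_le_one_iff.mpr (by nlinarith [ht'.2])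
            nlinarith [Real.exp_pos (bt * t' - T * bt), sq_nonneg (1 - Real.exp (-(T * bt))),
              mul_le_mul_of_nonneg_right ha1 hp0.le]
          have hpart2 : (∫ t in Set.Icc t' T, D t)
              ≤ (1 / bt) * (1 - Real.exp (-(T * bt))) := by
            rw [MeasureTheory.setIntegral_congr_fun measurableSet_Icc
              (fun s hs => by simp only [hD]; exact if_pos hs.1)]
            rw [keldysh_expInt (-bt) (bt * t') t' T (neg_ne_zero.mpr hbne) ht'.2]
            have he : (Real.exp ((-bt) * T + bt * t') - Real.exp ((-bt) * t' + bt * t')) / (-bt)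
                = (Real.exp ((-bt) * t' + bt * t') - Real.exp ((-bt) * T + bt * t')) / bt := by
              rw [div_neg, ← neg_div, neg_sub]
            rw [he, one_div_mul_eq_div, div_le_div_iff_of_pos_right hbt0]
            have e1 : (-bt) * t' + bt * t' = 0 := by ring
            rw [e1, Real.exp_zero]
            have ha1 : Real.exp (-(T * bt)) ≤ Real.exp ((-bt) * T + bt * t') := by
              apply Real.exp_le_exp.mpr
              nlinarith [ht'.1]
            linarith
          linarith
      _ = (1 + Real.exp (-(β * qt))) * (1 / bt) * (1 - Real.exp (-(T * bt))) := by ring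
end
end

section
/- Let X be a finite nonempty set, β > 0, T > 0, and let A, B, Q be pairwise commuting hermitian operators on ℂ^X with B positive definite. Set f = (I + exp(−βQ − 2TB))^{−1} and define the Keldysh covariance blocks C_{ρσ}(t,t') for ρ,σ ∈ {+,−}, t,t' ∈ [0,T] by: C_{−+}(t,t') = exp(−itA) f exp(it'A) exp((−2T+t+t')B); C_{+−}(t,t') = −exp(−itA) f exp(−βQ) exp(it'A) exp(−(t+t')B); C_{++}(t,t') = 1_{t≥t'} exp(−itA) f exp(it'A) exp((t'−t)B) − 1_{t<t'} exp(−itA) f exp(−βQ) exp(it'A) exp((t'−t−2T)B); C_{−−}(t,t') = 1_{t≤t'} exp(−itA) f exp(it'A) exp((t−t')B) − 1_{t>t'} exp(−itA) f exp(−βQ) exp(it'A) exp((t−t'−2T)B). Let q̃ and b̃ be the smallest eigenvalues of Q and B, and let |X| denote the cardinality of X. Define the decay constant α_C = max{ sup_{ρ∈{+,−}, t∈[0,T], x∈X} ∑_{σ∈{+,−}} ∫₀^T ∑_{y∈X} |(C_{ρσ}(t,t'))_{x,y}| dt', sup_{σ∈{+,−}, t'∈[0,T], y∈X} ∑_{ρ∈{+,−}}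 ∫₀^T ∑_{x∈X} |(C_{ρσ}(t,t'))_{x,y}| dt } and the modified decay constant α̃_C = max{ sup_{σ∈{+,−}, t'∈[0,T], y∈X} ∑_{x∈X} |(C_{+σ}(T,t'))_{x,y}|, sup_{ρ∈{+,−}, t∈[0,T], x∈X} ∑_{y∈X} |(C_{ρ−}(t,T))_{x,y}| }. Then α_C ≤ 2 |X| (1 + e^{−βq̃}) (1/b̃)(1 − e^{−Tb̃}) and α̃_C ≤ |X| max{1, e^{−βq̃} e^{−Tb̃}}. -/
open MeasureTheory
open scoped BigOperators Matrix ComplexOrder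

noncomputable section

set_option linter.unusedSectionVars false
set_option maxHeartbeats 4000000

namespace KCD
open scoped Matrix.Norms.L2Operator

lemma integral_exp_affine {b : ℝ} (hb : b ≠ 0) (w u v : ℝ) :
    ∫ s in u..v, Real.exp (b*(s+w)) =
      (Real.exp (b*(v+w)) - Real.exp (b*(u+w)))/b := by
  have h : ∀ s ∈ Set.uIcc u v,
      HasDerivAt (fun s => Real.exp (b*(s+w))/b) (Real.exp (b*(s+w))) s := by
    intro s _
    have h1 : HasDerivAt (fun s : ℝ => b*(s+w)) b s := by
      simpa using (((hasDerivAt_id s).add_const w).const_mul b)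
    have h2 := (Real.hasDerivAt_exp (b*(s+w))).comp s h1
    have h3 := h2.div_const b
    simpa [mul_div_assoc, mul_div_cancel_right₀ _ hb] using h3
  rw [intervalIntegral.integral_eq_sub_of_hasDerivAt h
    ((Real.continuous_exp.comp (by fun_prop)).intervalIntegrable u v)]
  ring

lemma integral_exp_affine' {b : ℝ} (hb : b ≠ 0) (w u v : ℝ) :
    ∫ s in u..v, Real.exp (b*(w-s)) =
      (Real.exp (b*(w-u)) - Real.exp (b*(w-v)))/b := by
  have h : ∀ s ∈ Set.uIcc u v,
      HasDerivAt (fun s => -Real.exp (b*(w-s))/b) (Real.exp (b*(w-s))) s := by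
    intro s _
    have h1 : HasDerivAt (fun s : ℝ => b*(w-s)) (-b) s := by
      have := ((hasDerivAt_id s).const_sub w).const_mul b
      simpa using this
    have h2 := (Real.hasDerivAt_exp (b*(w-s))).comp s h1
    have h3 := (h2.neg).div_const b
    have h4 : -(Real.exp (b*(w-s)) * -b) / b = Real.exp (b*(w-s)) := by field_simp
    rw [h4] at h3
    simpa [Function.comp] using h3
  rw [intervalIntegral.integral_eq_sub_of_hasDerivAt h
    ((Real.continuous_exp.comp (by fun_prop)).intervalIntegrable u v)]
  ring

/-- `∫_{Icc u v} e^{b(s+w)} ds ≤ (1 - e^{-Tb})/b` -/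
lemma exp_integral_Icc_le {b T u v w : ℝ} (hb : 0 < b) (huv : u ≤ v)
    (h1 : v - u ≤ T) (h2 : v + w ≤ 0) :
    ∫ s in Set.Icc u v, Real.exp (b*(s+w)) ≤ (1 - Real.exp (-(T*b)))/b := by
  rw [MeasureTheory.integral_Icc_eq_integral_Ioc, ← intervalIntegral.integral_of_le huv,
    integral_exp_affine hb.ne' w u v]
  rw [div_le_div_iff_of_pos_right hb]
  have e1 : Real.exp (b*(v+w)) ≤ 1 := Real.exp_le_one_iff.2 (by nlinarith)
  have efac : Real.exp (b*(u+w)) = Real.exp (b*(v+w)) * Real.exp (b*(u-v)) := by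
    rw [← Real.exp_add]; ring_nf
  have e2 : Real.exp (-(T*b)) ≤ Real.exp (b*(u-v)) := Real.exp_le_exp.2 (by nlinarith)
  have e3 : Real.exp (b*(u-v)) ≤ 1 := Real.exp_le_one_iff.2 (by nlinarith)
  calc Real.exp (b*(v+w)) - Real.exp (b*(u+w))
      = Real.exp (b*(v+w)) * (1 - Real.exp (b*(u-v))) := by rw [efac]; ring
    _ ≤ 1 * (1 - Real.exp (-(T*b))) := by
        apply mul_le_mul e1 (by linarith) (by linarith) zero_le_one
    _ = 1 - Real.exp (-(T*b)) := one_mul _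

/-- `∫_{Icc u v} e^{b(w-s)} ds ≤ (1 - e^{-Tb})/b` -/
lemma exp_integral_Icc_le' {b T u v w : ℝ} (hb : 0 < b) (huv : u ≤ v)
    (h1 : v - u ≤ T) (h2 : w ≤ u) :
    ∫ s in Set.Icc u v, Real.exp (b*(w-s)) ≤ (1 - Real.exp (-(T*b)))/b := by
  rw [MeasureTheory.integral_Icc_eq_integral_Ioc, ← intervalIntegral.integral_of_le huv,
    integral_exp_affine' hb.ne' w u v]
  rw [div_le_div_iff_of_pos_right hb]
  have e1 : Real.exp (b*(w-u)) ≤ 1 := Real.exp_le_one_iff.2 (by nlinarith)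
  have efac : Real.exp (b*(w-v)) = Real.exp (b*(w-u)) * Real.exp (b*(u-v)) := by
    rw [← Real.exp_add]; ring_nf
  have e2 : Real.exp (-(T*b)) ≤ Real.exp (b*(u-v)) := Real.exp_le_exp.2 (by nlinarith)
  have e3 : Real.exp (b*(u-v)) ≤ 1 := Real.exp_le_one_iff.2 (by nlinarith)
  calc Real.exp (b*(w-u)) - Real.exp (b*(w-v))
      = Real.exp (b*(w-u)) * (1 - Real.exp (b*(u-v))) := by rw [efac]; ring
    _ ≤ 1 * (1 - Real.exp (-(T*b))) := by
        apply mul_le_mul e1 (by linarith) (by linarith) zero_le_one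
    _ = 1 - Real.exp (-(T*b)) := one_mul _


section MatrixAux
variable {X : Type*} [Fintype X] [DecidableEq X] [Nonempty X]

lemma abs_entry_le_l2norm (M : Matrix X X ℂ) (x y : X) : ‖M x y‖ ≤ ‖M‖ := by
  classical
  have h := Matrix.l2_opNorm_mulVec M ((WithLp.equiv 2 (X → ℂ)).symm (Pi.single y 1))
  have hx : ‖(WithLp.equiv 2 (X → ℂ)).symm (Pi.single y (1:ℂ))‖ = 1 := by
    rw [EuclideanSpace.norm_eq]
    have : ∀ i : X, ‖(Pi.single y (1:ℂ) : X → ℂ) i‖ ^ 2 = if i = y then 1 else 0 := by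
      intro i
      by_cases h : i = y <;> simp [h, Pi.single_apply]
    simp only [WithLp.equiv_symm_apply, WithLp.ofLp_toLp, PiLp.toLp_apply, this]
    simp
  rw [hx, mul_one] at h
  refine le_trans ?_ h
  have h1 : M *ᵥ (Pi.single y (1:ℂ)) = fun i => M i y := by
    ext i; simp [Matrix.mulVec_single]
  rw [EuclideanSpace.norm_eq]
  have h2 : ‖M x y‖ = Real.sqrt (‖((WithLp.equiv 2 (X → ℂ)).symm (M *ᵥ Pi.single y 1)) x‖^2) := by
    rw [Real.sqrt_sq (norm_nonneg _)]
    simp [h1, WithLp.equiv_symm_apply]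
  rw [h2]
  apply Real.sqrt_le_sqrt
  exact Finset.single_le_sum (f := fun i => ‖((WithLp.equiv 2 (X → ℂ)).symm (M *ᵥ Pi.single y 1)) i‖^2) (fun i _ => by positivity) (Finset.mem_univ x)

lemma sum_row_abs_le (M : Matrix X X ℂ) (x : X) :
    ∑ y, ‖M x y‖ ≤ (Fintype.card X : ℝ) * ‖M‖ := by
  calc ∑ y, ‖M x y‖ ≤ ∑ _y : X, ‖M‖ :=
        Finset.sum_le_sum fun y _ => abs_entry_le_l2norm M x y
    _ = (Fintype.card X : ℝ) * ‖M‖ := by simp [Finset.sum_const, nsmul_eq_mul]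

lemma sum_col_abs_le (M : Matrix X X ℂ) (y : X) :
    ∑ x, ‖M x y‖ ≤ (Fintype.card X : ℝ) * ‖M‖ := by
  have h := sum_row_abs_le Mᴴ y
  rw [Matrix.l2_opNorm_conjTranspose] at h
  refine le_trans (le_of_eq ?_) h
  refine Finset.sum_congr rfl fun x _ => ?_
  simp [Matrix.conjTranspose_apply]

lemma l2norm_diagonal_le {v : X → ℂ} {c : ℝ} (h : ∀ i, ‖v i‖ ≤ c) :
    ‖Matrix.diagonal v‖ ≤ c := by
  have hc : 0 ≤ c := le_trans (norm_nonneg _) (h (Classical.arbitrary X))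
  rw [Matrix.l2_opNorm_def]
  refine ContinuousLinearMap.opNorm_le_bound _ hc fun w => ?_
  have happ : (LinearEquiv.trans Matrix.toEuclideanLin LinearMap.toContinuousLinearMap
      (Matrix.diagonal v) : EuclideanSpace ℂ X →L[ℂ] EuclideanSpace ℂ X) w
      = (WithLp.equiv 2 (X → ℂ)).symm ((Matrix.diagonal v) *ᵥ (WithLp.equiv 2 (X → ℂ) w)) := rfl
  rw [happ, EuclideanSpace.norm_eq]
  have hw : c * ‖w‖ = Real.sqrt (c^2 * ∑ i, ‖w i‖^2) := by
    rw [Real.sqrt_mul (by positivity), Real.sqrt_sq hc, EuclideanSpace.norm_eq]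
  rw [hw]
  apply Real.sqrt_le_sqrt
  rw [Finset.mul_sum]
  refine Finset.sum_le_sum fun i _ => ?_
  have : ((Matrix.diagonal v) *ᵥ (WithLp.equiv 2 (X → ℂ) w)) i = v i * w i := by
    simp [Matrix.mulVec_diagonal]
  simp only [WithLp.equiv_symm_apply, WithLp.ofLp_toLp, PiLp.toLp_apply, this]
  rw [norm_mul, mul_pow]
  have h2 : ‖v i‖ ≤ c := h i
  have : ‖v i‖^2 ≤ c^2 := by nlinarith [norm_nonneg (v i)]
  nlinarith [sq_nonneg ‖w i‖, norm_nonneg (w i)]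


lemma unitary_inv_eq_star {U : Matrix X X ℂ} (hU : U ∈ Matrix.unitaryGroup X ℂ) :
    U⁻¹ = star U :=
  Matrix.inv_eq_right_inv (Unitary.mul_star_self_of_mem hU)

lemma norm_unitary_conj_le {U M : Matrix X X ℂ} (hU : U ∈ Matrix.unitaryGroup X ℂ) :
    ‖U * M * star U‖ ≤ ‖M‖ := by
  have h1 : ‖U * M * star U‖ ≤ ‖U * M‖ * ‖star U‖ := Matrix.l2_opNorm_mul _ _
  have h2 : ‖U * M‖ ≤ ‖U‖ * ‖M‖ := Matrix.l2_opNorm_mul _ _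
  have hu : ‖U‖ = 1 := CStarRing.norm_of_mem_unitary hU
  have hus : ‖star U‖ = 1 := CStarRing.norm_of_mem_unitary (Unitary.star_mem hU)
  calc ‖U * M * star U‖ ≤ ‖U * M‖ * ‖star U‖ := h1
    _ = ‖U * M‖ := by rw [hus, mul_one]
    _ ≤ ‖U‖ * ‖M‖ := h2
    _ = ‖M‖ := by rw [hu, one_mul]

lemma l2norm_herm_le {M : Matrix X X ℂ} (hM : M.IsHermitian) {c : ℝ}
    (h : ∀ i, |hM.eigenvalues i| ≤ c) : ‖M‖ ≤ c := by
  conv_lhs => rw [hM.spectral_theorem]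
  refine le_trans (norm_unitary_conj_le (hM.eigenvectorUnitary).2) ?_
  exact l2norm_diagonal_le fun i => by simpa using h i

lemma mexp_herm_eq {M : Matrix X X ℂ} (hM : M.IsHermitian) :
    NormedSpace.exp M = (hM.eigenvectorUnitary : Matrix X X ℂ) *
      Matrix.diagonal (fun i => Complex.exp (hM.eigenvalues i : ℂ)) *
      star (hM.eigenvectorUnitary : Matrix X X ℂ) := by
  have hU : IsUnit (hM.eigenvectorUnitary : Matrix X X ℂ) :=
    ⟨⟨(hM.eigenvectorUnitary : Matrix X X ℂ), star (hM.eigenvectorUnitary : Matrix X X ℂ),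
      Unitary.mul_star_self_of_mem hM.eigenvectorUnitary.2,
      Unitary.star_mul_self_of_mem hM.eigenvectorUnitary.2⟩, rfl⟩
  have hinv : (hM.eigenvectorUnitary : Matrix X X ℂ)⁻¹ = star (hM.eigenvectorUnitary : Matrix X X ℂ) :=
    unitary_inv_eq_star hM.eigenvectorUnitary.2
  conv_lhs => rw [hM.spectral_theorem, Unitary.conjStarAlgAut_apply, ← hinv]
  rw [Matrix.exp_conj _ _ hU, Matrix.exp_diagonal, hinv]
  have harg : (NormedSpace.exp (RCLike.ofReal ∘ hM.eigenvalues) : X → ℂ)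
      = fun i => Complex.exp (hM.eigenvalues i : ℂ) := by
    funext i
    rw [Pi.exp_def]
    simp [Function.comp, ← Complex.exp_eq_exp_ℂ]
  rw [harg]

lemma l2norm_mexp_herm_le {M : Matrix X X ℂ} (hM : M.IsHermitian) {c : ℝ}
    (h : ∀ i, hM.eigenvalues i ≤ c) : ‖NormedSpace.exp M‖ ≤ Real.exp c := by
  rw [mexp_herm_eq hM]
  refine le_trans (norm_unitary_conj_le (hM.eigenvectorUnitary).2) ?_
  refine l2norm_diagonal_le fun i => ?_
  rw [Complex.norm_exp]
  simp only [Complex.ofReal_re]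
  exact Real.exp_le_exp.2 (h i)

lemma star_dot_self_eigenvectorBasis {M : Matrix X X ℂ} (hM : M.IsHermitian) (i : X) :
    dotProduct (star (⇑(hM.eigenvectorBasis i) : X → ℂ)) (⇑(hM.eigenvectorBasis i)) = 1 := by
  have h1 : (inner ℂ (hM.eigenvectorBasis i) (hM.eigenvectorBasis i) : ℂ) = 1 := by
    rw [inner_self_eq_norm_sq_to_K]
    rw [hM.eigenvectorBasis.orthonormal.1 i]
    norm_num
  rw [← h1, EuclideanSpace.inner_eq_star_dotProduct, dotProduct_comm]

lemma eig_le_of_psd {M : Matrix X X ℂ} (hM : M.IsHermitian) {c : ℝ}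
    (h : Matrix.PosSemidef ((c:ℂ) • 1 - M)) : ∀ i, hM.eigenvalues i ≤ c := by
  intro i
  have h0 := h.re_dotProduct_nonneg (⇑(hM.eigenvectorBasis i))
  have hexp : dotProduct (star (⇑(hM.eigenvectorBasis i) : X → ℂ))
      (((c:ℂ) • 1 - M) *ᵥ ⇑(hM.eigenvectorBasis i))
      = (c:ℂ) - dotProduct (star (⇑(hM.eigenvectorBasis i) : X → ℂ))
        (M *ᵥ ⇑(hM.eigenvectorBasis i)) := by
    rw [Matrix.sub_mulVec, dotProduct_sub, Matrix.smul_mulVec, Matrix.one_mulVec,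
      dotProduct_smul, star_dot_self_eigenvectorBasis hM i]
    simp
  rw [hexp, map_sub, ← hM.eigenvalues_eq i] at h0
  simp only [RCLike.re_to_complex, Complex.ofReal_re] at h0
  linarith

lemma posSemidef_real_smul {N : Matrix X X ℂ} (hN : N.PosSemidef) {a : ℝ} (ha : 0 ≤ a) :
    ((a:ℂ) • N).PosSemidef := by
  constructor
  · have := hN.1
    unfold Matrix.IsHermitian at *
    rw [Matrix.conjTranspose_smul, this]
    congr 1
    simp [Complex.star_def, Complex.conj_ofReal]
  · exact (hN.smul (Complex.zero_le_real.2 ha)).2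

lemma posSemidef_sub_smul_one {M : Matrix X X ℂ} (hM : M.IsHermitian) {c : ℝ}
    (h : ∀ i, c ≤ hM.eigenvalues i) : (M - (c:ℂ) • 1).PosSemidef := by
  have key : M - (c:ℂ) • 1 = (hM.eigenvectorUnitary : Matrix X X ℂ) *
      Matrix.diagonal (fun i => ((hM.eigenvalues i - c : ℝ) : ℂ)) *
      (hM.eigenvectorUnitary : Matrix X X ℂ)ᴴ := by
    have h1 : (hM.eigenvectorUnitary : Matrix X X ℂ) *
        ((c:ℂ) • 1) * (hM.eigenvectorUnitary : Matrix X X ℂ)ᴴ = (c:ℂ) • 1 := by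
      rw [Matrix.mul_smul, Matrix.mul_one, Matrix.smul_mul, ← Matrix.star_eq_conjTranspose,
        Unitary.mul_star_self_of_mem hM.eigenvectorUnitary.2]
    conv_lhs => rw [hM.spectral_theorem, Unitary.conjStarAlgAut_apply]
    rw [← Matrix.star_eq_conjTranspose] at h1 ⊢
    rw [← h1, ← Matrix.sub_mul, ← Matrix.mul_sub]
    congr 2
    rw [Matrix.smul_one_eq_diagonal, Matrix.diagonal_sub]
    congr 1
    funext i
    push_cast
    simp [Function.comp]
  rw [key]
  refine Matrix.PosSemidef.mul_mul_conjTranspose_same ?_ _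
  refine Matrix.PosSemidef.diagonal fun i => ?_
  exact Complex.zero_le_real.2 (by linarith [h i])


lemma isHermitian_real_smul {M : Matrix X X ℂ} (hM : M.IsHermitian) (r : ℝ) :
    ((r:ℂ) • M).IsHermitian := by
  unfold Matrix.IsHermitian at *
  rw [Matrix.conjTranspose_smul, hM]
  congr 1
  simp [Complex.star_def, Complex.conj_ofReal]

lemma posSemidef_mexp_herm {M : Matrix X X ℂ} (hM : M.IsHermitian) :
    (NormedSpace.exp M).PosSemidef := by
  have h2 : M = ((1/2 : ℝ):ℂ) • M + ((1/2 : ℝ):ℂ) • M := by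
    rw [← add_smul]; norm_num
  have hcomm : Commute (((1/2 : ℝ):ℂ) • M) (((1/2 : ℝ):ℂ) • M) := Commute.refl _
  have hmul : NormedSpace.exp M =
      NormedSpace.exp (((1/2 : ℝ):ℂ) • M) * NormedSpace.exp (((1/2 : ℝ):ℂ) • M) := by
    conv_lhs => rw [h2]
    exact Matrix.exp_add_of_commute _ _ hcomm
  have hherm : (NormedSpace.exp (((1/2 : ℝ):ℂ) • M)).IsHermitian :=
    (isHermitian_real_smul hM (1/2)).exp
  rw [hmul]
  have := Matrix.posSemidef_conjTranspose_mul_self (NormedSpace.exp (((1/2 : ℝ):ℂ) • M))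
  rwa [hherm.eq] at this

lemma eig_real_smul_le {M : Matrix X X ℂ} (hM : M.IsHermitian) {r c : ℝ} (hr : r ≤ 0)
    (hc : ∀ i, c ≤ hM.eigenvalues i) :
    ∀ i, (isHermitian_real_smul hM r).eigenvalues i ≤ r * c := by
  apply eig_le_of_psd
  have hkey : ((r*c : ℝ):ℂ) • (1 : Matrix X X ℂ) - (r:ℂ) • M
      = ((-r : ℝ):ℂ) • (M - (c:ℂ) • 1) := by
    push_cast
    module
  rw [hkey]
  exact posSemidef_real_smul (posSemidef_sub_smul_one hM hc) (by linarith)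

lemma norm_mexp_real_smul_le {M : Matrix X X ℂ} (hM : M.IsHermitian) {r c : ℝ} (hr : r ≤ 0)
    (hc : ∀ i, c ≤ hM.eigenvalues i) :
    ‖NormedSpace.exp ((r:ℂ) • M)‖ ≤ Real.exp (r * c) :=
  l2norm_mexp_herm_le (isHermitian_real_smul hM r) (eig_real_smul_le hM hr hc)

lemma norm_mexp_skew_le {A : Matrix X X ℂ} (hA : A.IsHermitian) (s : ℝ) :
    ‖NormedSpace.exp ((Complex.I * (s:ℂ)) • A)‖ ≤ 1 := by
  set N := (Complex.I * (s:ℂ)) • A with hN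
  have hstar : Nᴴ = -N := by
    rw [hN, Matrix.conjTranspose_smul, hA.eq]
    rw [← neg_smul]
    congr 1
    simp [Complex.star_def, map_mul, Complex.conj_I, Complex.conj_ofReal]
  have hmem : NormedSpace.exp N ∈ Matrix.unitaryGroup X ℂ := by
    rw [Matrix.mem_unitaryGroup_iff']
    rw [Matrix.star_eq_conjTranspose, ← Matrix.exp_conjTranspose, hstar,
      ← Matrix.exp_add_of_commute _ _ (Commute.refl N).neg_left]
    simp [NormedSpace.exp_zero]
  exact le_of_eq (CStarRing.norm_of_mem_unitary hmem)

lemma norm_inv_one_add_psd_le {P : Matrix X X ℂ} (hP : P.PosSemidef) :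
    ‖(1 + P)⁻¹‖ ≤ 1 := by
  have hSpd : (1 + P).PosDef := Matrix.PosDef.add_posSemidef Matrix.PosDef.one hP
  have hSinv : ((1 + P)⁻¹).PosDef := hSpd.inv
  have hdet : IsUnit (1 + P).det := (Matrix.isUnit_iff_isUnit_det _).mp hSpd.isUnit
  have hmul : (1 + P) * (1 + P)⁻¹ = 1 := Matrix.mul_nonsing_inv _ hdet
  have hmul' : (1 + P)⁻¹ * (1 + P) = 1 := Matrix.nonsing_inv_mul _ hdet
  have hPP : (P + P * P).PosSemidef := by
    have h2 : (P * P).PosSemidef := by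
      have := Matrix.posSemidef_conjTranspose_mul_self P
      rwa [hP.1.eq] at this
    exact hP.add h2
  have hkey : (1 : Matrix X X ℂ) - (1 + P)⁻¹ = ((1 + P)⁻¹)ᴴ * (P + P * P) * (1 + P)⁻¹ := by
    rw [hSinv.1.eq]
    have h1 : P + P * P = P * (1 + P) := by noncomm_ring
    rw [h1, ← Matrix.mul_assoc, Matrix.mul_assoc ((1+P)⁻¹ * P), hmul, Matrix.mul_one]
    have h2 : (1 + P)⁻¹ * P = (1 + P)⁻¹ * (1 + P) - (1 + P)⁻¹ := by
      rw [Matrix.mul_add, Matrix.mul_one]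
      abel
    rw [h2, hmul']
  have hub : ∀ i, (hSinv.1).eigenvalues i ≤ 1 := by
    have := eig_le_of_psd (hSinv.1) (c := 1) ?_
    · exact this
    · rw [Complex.ofReal_one, one_smul]
      rw [hkey]
      exact (hPP.conjTranspose_mul_mul_same _)
  have hlb : ∀ i, 0 ≤ (hSinv.1).eigenvalues i := fun i => hSinv.posSemidef.eigenvalues_nonneg i
  refine l2norm_herm_le (hSinv.1) fun i => ?_
  rw [abs_le]
  exact ⟨by linarith [hlb i], hub i⟩


lemma norm_mul_le_of_le {a b : Matrix X X ℂ} {ca cb : ℝ} (ha : ‖a‖ ≤ ca) (hb : ‖b‖ ≤ cb) :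
    ‖a * b‖ ≤ ca * cb :=
  (Matrix.l2_opNorm_mul a b).trans
    (mul_le_mul ha hb (norm_nonneg _) ((norm_nonneg _).trans ha))

end MatrixAux

lemma indicator_integral_le {T c K : ℝ} (hc : 0 ≤ c) {S : Set ℝ}
    (hS : MeasurableSet S) {g : ℝ → ℝ} (hg : Continuous g) (hg0 : ∀ s, 0 ≤ g s)
    {u v : ℝ} (hsub : Set.Icc (0:ℝ) T ∩ S ⊆ Set.Icc u v)
    (hIcc : ∫ s in Set.Icc u v, g s ≤ K) :
    ∫ s in Set.Icc (0:ℝ) T, Set.indicator S (fun s => c * g s) s ≤ c * K := by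
  rw [MeasureTheory.setIntegral_indicator hS, MeasureTheory.integral_const_mul]
  have hmono : ∫ s in Set.Icc (0:ℝ) T ∩ S, g s ≤ ∫ s in Set.Icc u v, g s :=
    MeasureTheory.setIntegral_mono_set (hg.integrableOn_Icc)
      (Filter.Eventually.of_forall (fun s => hg0 s)) (HasSubset.Subset.eventuallyLE hsub)
  exact mul_le_mul_of_nonneg_left (hmono.trans hIcc) hc

end KCD

open scoped Matrix.Norms.L2Operator

/-- Bounds on the decay constant `α_C` and the modified decay constant `α̃_C` of the Keldysh
covariance of a dissipative system (`[A,B] = [A,Q] = [B,Q] = 0`, `B > 0`):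
`α_C ≤ 2|X|(1+e^{−βq̃})(1/b̃)(1−e^{−Tb̃})` and `α̃_C ≤ |X| max{1, e^{−βq̃}e^{−Tb̃}}`,
where `q̃, b̃` are the smallest eigenvalues of `Q, B`. The bound on each supremum is
expressed pointwise; `true` encodes the branch `+`, `false` encodes `−`. -/
theorem decay_constant_bounds_keldyshCovDiss
    {X : Type*} [Fintype X] [DecidableEq X] [Nonempty X]
    (β T : ℝ) (hβ : 0 < β) (hT : 0 < T)
    (A B Q : Matrix X X ℂ) (hA : A.IsHermitian) (hQ : Q.IsHermitian) (hB : B.PosDef)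
    (hAB : Commute A B) (hAQ : Commute A Q) (hBQ : Commute B Q) :
    ∀ qt bt : ℝ, qt = ⨅ ℓ, hQ.eigenvalues ℓ → bt = ⨅ ℓ, hB.1.eigenvalues ℓ →
      ((∀ ρ : Bool, ∀ t ∈ Set.Icc (0 : ℝ) T, ∀ x : X,
        (∑ σ : Bool, ∫ t' in Set.Icc (0 : ℝ) T,
            ∑ y : X, ‖(keldyshCovDiss β T A B Q ρ σ t t') x y‖)
          ≤ 2 * (Fintype.card X : ℝ) * (1 + Real.exp (-(β * qt))) * (1 / bt) *
              (1 - Real.exp (-(T * bt)))) ∧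
      (∀ σ : Bool, ∀ t' ∈ Set.Icc (0 : ℝ) T, ∀ y : X,
        (∑ ρ : Bool, ∫ t in Set.Icc (0 : ℝ) T,
            ∑ x : X, ‖(keldyshCovDiss β T A B Q ρ σ t t') x y‖)
          ≤ 2 * (Fintype.card X : ℝ) * (1 + Real.exp (-(β * qt))) * (1 / bt) *
              (1 - Real.exp (-(T * bt))))) ∧
      ((∀ σ : Bool, ∀ t' ∈ Set.Icc (0 : ℝ) T, ∀ y : X,
        (∑ x : X, ‖(keldyshCovDiss β T A B Q true σ T t') x y‖)
          ≤ (Fintype.card X : ℝ) * max 1 (Real.exp (-(β * qt)) * Real.exp (-(T * bt)))) ∧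
      (∀ ρ : Bool, ∀ t ∈ Set.Icc (0 : ℝ) T, ∀ x : X,
        (∑ y : X, ‖(keldyshCovDiss β T A B Q ρ false t T) x y‖)
          ≤ (Fintype.card X : ℝ) * max 1 (Real.exp (-(β * qt)) * Real.exp (-(T * bt))))) := by
  classical
  intro qt bt hqt hbt
  have hble : ∀ i, bt ≤ hB.1.eigenvalues i := fun i => by
    rw [hbt]; exact ciInf_le (Set.Finite.bddBelow (Set.finite_range _)) i
  have hqle : ∀ i, qt ≤ hQ.eigenvalues i := fun i => by
    rw [hqt]; exact ciInf_le (Set.Finite.bddBelow (Set.finite_range _)) i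
  have hbt0 : 0 < bt := by
    obtain ⟨i, hi⟩ := exists_eq_ciInf_of_finite (f := hB.1.eigenvalues)
    rw [hbt, ← hi]; exact hB.eigenvalues_pos i
  set cX : ℝ := (Fintype.card X : ℝ) with hcX
  have hcX1 : (1:ℝ) ≤ cX := by
    rw [hcX]; exact_mod_cast Fintype.card_pos
  have hcX0 : (0:ℝ) ≤ cX := le_trans zero_le_one hcX1
  set eβ : ℝ := Real.exp (-(β * qt)) with heβ
  have heβ0 : 0 < eβ := Real.exp_pos _
  set K : ℝ := (1 - Real.exp (-(T * bt)))/bt with hKdef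
  have hexpT : Real.exp (-(T*bt)) ≤ 1 := Real.exp_le_one_iff.2 (by nlinarith)
  have hK0 : 0 ≤ K := by rw [hKdef]; exact div_nonneg (by linarith) hbt0.le
  set fM : Matrix X X ℂ := (1 + mexp ((-β : ℂ) • Q + ((-(2 * T) : ℝ) : ℂ) • B))⁻¹ with hfM
  set EM : ℝ → Matrix X X ℂ := fun s => mexp ((Complex.I * (s : ℂ)) • A) with hEM
  set GM : ℝ → Matrix X X ℂ := fun s => mexp (((s : ℝ) : ℂ) • B) with hGM
  set eQM : Matrix X X ℂ := mexp ((-β : ℂ) • Q) with heQM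
  have hcastβ : ((-β : ℝ) : ℂ) = (-β : ℂ) := by push_cast; ring
  have hEn : ∀ s : ℝ, ‖EM s‖ ≤ 1 := fun s => KCD.norm_mexp_skew_le hA s
  have hGn : ∀ s : ℝ, s ≤ 0 → ‖GM s‖ ≤ Real.exp (s * bt) := fun s hs =>
    KCD.norm_mexp_real_smul_le hB.1 hs hble
  have hQn : ‖eQM‖ ≤ eβ := by
    have h := KCD.norm_mexp_real_smul_le hQ (neg_nonpos.mpr hβ.le) hqle
    rw [hcastβ] at h
    rw [heβ, show -(β*qt) = (-β)*qt by ring]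
    exact h
  have hfherm : ((-β : ℂ) • Q + ((-(2 * T) : ℝ) : ℂ) • B).IsHermitian := by
    have h1 := KCD.isHermitian_real_smul hQ (-β)
    rw [hcastβ] at h1
    exact h1.add (KCD.isHermitian_real_smul hB.1 (-(2*T)))
  have hfn : ‖fM‖ ≤ 1 := KCD.norm_inv_one_add_psd_le (KCD.posSemidef_mexp_herm hfherm)
  have hprod1 : ∀ (a c s : ℝ), s ≤ 0 → ‖EM a * fM * EM c * GM s‖ ≤ Real.exp (s * bt) := by
    intro a c s hs
    have h := KCD.norm_mul_le_of_le (KCD.norm_mul_le_of_le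
      (KCD.norm_mul_le_of_le (hEn a) hfn) (hEn c)) (hGn s hs)
    simpa using h
  have hprod2 : ∀ (a c s : ℝ), s ≤ 0 →
      ‖EM a * fM * eQM * EM c * GM s‖ ≤ eβ * Real.exp (s * bt) := by
    intro a c s hs
    have h := KCD.norm_mul_le_of_le (KCD.norm_mul_le_of_le (KCD.norm_mul_le_of_le
      (KCD.norm_mul_le_of_le (hEn a) hfn) hQn) (hEn c)) (hGn s hs)
    simpa using h
  have hrow : ∀ (M : Matrix X X ℂ) (c : ℝ), ‖M‖ ≤ c → ∀ x : X,
      ∑ y, ‖M x y‖ ≤ cX * c := fun M c h x =>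
    (KCD.sum_row_abs_le M x).trans (mul_le_mul_of_nonneg_left h (by positivity))
  have hcol : ∀ (M : Matrix X X ℂ) (c : ℝ), ‖M‖ ≤ c → ∀ y : X,
      ∑ x, ‖M x y‖ ≤ cX * c := fun M c h y =>
    (KCD.sum_col_abs_le M y).trans (mul_le_mul_of_nonneg_left h (by positivity))
  have ceqFT : ∀ t s : ℝ, keldyshCovDiss β T A B Q false true t s
      = EM (-t) * fM * EM s * GM (-(2*T) + t + s) := fun _ _ => rfl
  have ceqTF : ∀ t s : ℝ, keldyshCovDiss β T A B Q true false t s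
      = -(EM (-t) * fM * eQM * EM s * GM (-(t + s))) := fun _ _ => rfl
  have ceqTT : ∀ t s : ℝ, keldyshCovDiss β T A B Q true true t s
      = (if s ≤ t then (1:ℂ) else 0) • (EM (-t) * fM * EM s * GM (s - t))
        - (if t < s then (1:ℂ) else 0) • (EM (-t) * fM * eQM * EM s * GM (s - t - 2*T)) :=
    fun _ _ => rfl
  have ceqFF : ∀ t s : ℝ, keldyshCovDiss β T A B Q false false t s
      = (if t ≤ s then (1:ℂ) else 0) • (EM (-t) * fM * EM s * GM (t - s))
        - (if s < t then (1:ℂ) else 0) • (EM (-t) * fM * eQM * EM s * GM (t - s - 2*T)) :=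
    fun _ _ => rfl
  -- generic integral helpers
  have intPlain : ∀ (F : ℝ → ℝ) (w c : ℝ), 0 ≤ c →
      (∀ s ∈ Set.Icc (0:ℝ) T, 0 ≤ F s) →
      (∀ s ∈ Set.Icc (0:ℝ) T, F s ≤ c * Real.exp (bt * (s + w))) →
      T + w ≤ 0 →
      (∫ s in Set.Icc (0:ℝ) T, F s) ≤ c * K := by
    intro F w c hc h0 hle hw
    have hgi : IntegrableOn (fun s => c * Real.exp (bt * (s + w))) (Set.Icc (0:ℝ) T) :=
      Continuous.integrableOn_Icc (by fun_prop)
    have h0' : (0 : ℝ → ℝ) ≤ᵐ[volume.restrict (Set.Icc (0:ℝ) T)] F :=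
      (ae_restrict_iff' measurableSet_Icc).2 (Filter.Eventually.of_forall h0)
    have hle' : F ≤ᵐ[volume.restrict (Set.Icc (0:ℝ) T)]
        (fun s => c * Real.exp (bt * (s + w))) :=
      (ae_restrict_iff' measurableSet_Icc).2 (Filter.Eventually.of_forall hle)
    refine (MeasureTheory.integral_mono_of_nonneg h0' hgi hle').trans ?_
    rw [MeasureTheory.integral_const_mul, hKdef]
    exact mul_le_mul_of_nonneg_left
      (KCD.exp_integral_Icc_le hbt0 hT.le (by linarith) (by linarith)) hc
  have intPlain' : ∀ (F : ℝ → ℝ) (w c : ℝ), 0 ≤ c →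
      (∀ s ∈ Set.Icc (0:ℝ) T, 0 ≤ F s) →
      (∀ s ∈ Set.Icc (0:ℝ) T, F s ≤ c * Real.exp (bt * (w - s))) →
      w ≤ 0 →
      (∫ s in Set.Icc (0:ℝ) T, F s) ≤ c * K := by
    intro F w c hc h0 hle hw
    have hgi : IntegrableOn (fun s => c * Real.exp (bt * (w - s))) (Set.Icc (0:ℝ) T) :=
      Continuous.integrableOn_Icc (by fun_prop)
    have h0' : (0 : ℝ → ℝ) ≤ᵐ[volume.restrict (Set.Icc (0:ℝ) T)] F :=
      (ae_restrict_iff' measurableSet_Icc).2 (Filter.Eventually.of_forall h0)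
    have hle' : F ≤ᵐ[volume.restrict (Set.Icc (0:ℝ) T)]
        (fun s => c * Real.exp (bt * (w - s))) :=
      (ae_restrict_iff' measurableSet_Icc).2 (Filter.Eventually.of_forall hle)
    refine (MeasureTheory.integral_mono_of_nonneg h0' hgi hle').trans ?_
    rw [MeasureTheory.integral_const_mul, hKdef]
    exact mul_le_mul_of_nonneg_left
      (KCD.exp_integral_Icc_le' hbt0 hT.le (by linarith) (by linarith)) hc
  have intSplit : ∀ (F : ℝ → ℝ) (c1 c2 : ℝ) (g1 g2 : ℝ → ℝ) (S1 S2 : Set ℝ),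
      MeasurableSet S1 → MeasurableSet S2 →
      Continuous g1 → Continuous g2 →
      (∀ s, 0 ≤ g1 s) → (∀ s, 0 ≤ g2 s) →
      0 ≤ c1 → 0 ≤ c2 →
      (∀ s ∈ Set.Icc (0:ℝ) T, 0 ≤ F s) →
      (∀ s ∈ Set.Icc (0:ℝ) T,
        F s ≤ Set.indicator S1 (fun s => c1 * g1 s) s
          + Set.indicator S2 (fun s => c2 * g2 s) s) →
      ∀ (u1 v1 u2 v2 : ℝ),
      Set.Icc (0:ℝ) T ∩ S1 ⊆ Set.Icc u1 v1 →
      Set.Icc (0:ℝ) T ∩ S2 ⊆ Set.Icc u2 v2 →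
      (∫ s in Set.Icc u1 v1, g1 s) ≤ K → (∫ s in Set.Icc u2 v2, g2 s) ≤ K →
      (∫ s in Set.Icc (0:ℝ) T, F s) ≤ c1 * K + c2 * K := by
    intro F c1 c2 g1 g2 S1 S2 hS1 hS2 hg1 hg2 hg10 hg20 hc1 hc2 h0 hle u1 v1 u2 v2
      hsub1 hsub2 hi1 hi2
    have hgi1 : Integrable (fun s => Set.indicator S1 (fun s => c1 * g1 s) s)
        (volume.restrict (Set.Icc (0:ℝ) T)) := by
      have h : IntegrableOn (fun s => c1 * g1 s) (Set.Icc (0:ℝ) T) :=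
        Continuous.integrableOn_Icc (by fun_prop)
      exact h.indicator hS1
    have hgi2 : Integrable (fun s => Set.indicator S2 (fun s => c2 * g2 s) s)
        (volume.restrict (Set.Icc (0:ℝ) T)) := by
      have h : IntegrableOn (fun s => c2 * g2 s) (Set.Icc (0:ℝ) T) :=
        Continuous.integrableOn_Icc (by fun_prop)
      exact h.indicator hS2
    have h0' : (0 : ℝ → ℝ) ≤ᵐ[volume.restrict (Set.Icc (0:ℝ) T)] F :=
      (ae_restrict_iff' measurableSet_Icc).2 (Filter.Eventually.of_forall h0)
    have hle' : F ≤ᵐ[volume.restrict (Set.Icc (0:ℝ) T)]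
        (fun s => Set.indicator S1 (fun s => c1 * g1 s) s
          + Set.indicator S2 (fun s => c2 * g2 s) s) :=
      (ae_restrict_iff' measurableSet_Icc).2 (Filter.Eventually.of_forall hle)
    refine (MeasureTheory.integral_mono_of_nonneg h0' (hgi1.add hgi2) hle').trans ?_
    rw [MeasureTheory.integral_add' hgi1 hgi2]
    exact add_le_add (KCD.indicator_integral_le hc1 hS1 hg1 hg10 hsub1 hi1)
      (KCD.indicator_integral_le hc2 hS2 hg2 hg20 hsub2 hi2)
  -- nonnegativity of integrands
  have hF0 : ∀ (ρ σ : Bool) (t : ℝ) (x : X), ∀ s ∈ Set.Icc (0:ℝ) T,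
      (0:ℝ) ≤ ∑ y, ‖(keldyshCovDiss β T A B Q ρ σ t s) x y‖ :=
    fun ρ σ t x s _ => Finset.sum_nonneg fun y _ => norm_nonneg _
  have hF0' : ∀ (ρ σ : Bool) (t' : ℝ) (y : X), ∀ s ∈ Set.Icc (0:ℝ) T,
      (0:ℝ) ≤ ∑ x, ‖(keldyshCovDiss β T A B Q ρ σ s t') x y‖ :=
    fun ρ σ t' y s _ => Finset.sum_nonneg fun x _ => norm_nonneg _
  have hRHS : 2 * cX * (1 + eβ) * (1 / bt) * (1 - Real.exp (-(T * bt)))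
      = 2*(cX*K) + 2*(cX*(eβ*K)) := by
    rw [hKdef]; field_simp
  have hmid : cX*K + (cX * K + cX*eβ*K) ≤ 2*(cX*K) + 2*(cX*(eβ*K)) := by nlinarith [mul_nonneg (mul_nonneg hcX0 heβ0.le) hK0]
  refine ⟨⟨?part1a, ?part1b⟩, ?part2a, ?part2b⟩
  case part1a =>
    intro ρ t ht x
    obtain ⟨ht0, htT⟩ := ht
    rw [Fintype.sum_bool]
    rcases ρ with _ | _
    · -- ρ = false : σ=true plain forward, σ=false split (cond t ≤ s)
      have h1 : (∫ s in Set.Icc (0:ℝ) T,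
          ∑ y, ‖(keldyshCovDiss β T A B Q false true t s) x y‖) ≤ cX * K := by
        refine intPlain _ (t - 2*T) cX hcX0 (hF0 _ _ _ _) ?_ (by linarith)
        intro s hs
        obtain ⟨hs0, hsT⟩ := hs
        rw [ceqFT]
        have h := hrow _ _ (hprod1 (-t) s (-(2*T)+t+s) (by linarith)) x
        rw [show bt*(s+(t-2*T)) = (-(2*T)+t+s)*bt by ring]
        exact h
      have h2 : (∫ s in Set.Icc (0:ℝ) T,
          ∑ y, ‖(keldyshCovDiss β T A B Q false false t s) x y‖)
            ≤ cX * K + cX*eβ*K := by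
        refine intSplit _ cX (cX*eβ) (fun s => Real.exp (bt*(t - s)))
          (fun s => Real.exp (bt*((t - 2*T) - s))) (Set.Ici t) (Set.Iio t)
          measurableSet_Ici measurableSet_Iio (by fun_prop) (by fun_prop)
          (fun s => (Real.exp_pos _).le) (fun s => (Real.exp_pos _).le)
          hcX0 (by positivity) (hF0 _ _ _ _) ?hle t T 0 t ?s1 ?s2 ?i1 ?i2
        case s1 => rintro s ⟨⟨hs0, hsT⟩, hst⟩; exact ⟨hst, hsT⟩
        case s2 => rintro s ⟨⟨hs0, hsT⟩, hst⟩; exact ⟨hs0, le_of_lt hst⟩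
        case i1 =>
          rw [hKdef]
          exact KCD.exp_integral_Icc_le' hbt0 htT (by linarith) le_rfl
        case i2 =>
          rw [hKdef]
          exact KCD.exp_integral_Icc_le' hbt0 ht0 (by linarith) (by linarith)
        case hle =>
          intro s hs
          obtain ⟨hs0, hsT⟩ := hs
          rw [ceqFF]
          by_cases hts : t ≤ s
          · rw [Set.indicator_of_mem (Set.mem_Ici.mpr hts),
              Set.indicator_of_notMem (fun hmem => absurd (Set.mem_Iio.mp hmem) (not_lt.2 hts))]
            rw [if_pos hts, if_neg (not_lt.2 hts), one_smul, zero_smul, sub_zero, add_zero]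
            have h := hrow _ _ (hprod1 (-t) s (t - s) (by linarith)) x
            rw [show (t-s)*bt = bt*(t-s) by ring] at h
            exact h
          · have hlt : s < t := lt_of_not_ge hts
            rw [Set.indicator_of_notMem (fun hmem => hts (Set.mem_Ici.mp hmem)),
              Set.indicator_of_mem (Set.mem_Iio.mpr hlt)]
            rw [if_neg hts, if_pos hlt, zero_smul, one_smul, zero_sub, zero_add]
            have h := hrow _ _ (hprod2 (-t) s (t - s - 2*T) (by linarith)) x
            have h2 : ∑ y, ‖(-(EM (-t) * fM * eQM * EM s * GM (t-s-2*T))) x y‖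
                = ∑ y, ‖(EM (-t) * fM * eQM * EM s * GM (t-s-2*T)) x y‖ := by
              refine Finset.sum_congr rfl fun y _ => ?_
              simp [Matrix.neg_apply]
            rw [h2]
            rw [show (t-s-2*T)*bt = bt*((t-2*T)-s) by ring, ← mul_assoc] at h
            exact h
      calc _ ≤ cX*K + (cX * K + cX*eβ*K) := add_le_add h1 h2
        _ ≤ 2*(cX*K) + 2*(cX*(eβ*K)) := hmid
        _ = 2 * cX * (1 + eβ) * (1 / bt) * (1 - Real.exp (-(T * bt))) := hRHS.symm
    · -- ρ = true : σ=true split (cond s ≤ t), σ=false plain mirrored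
      have h1 : (∫ s in Set.Icc (0:ℝ) T,
          ∑ y, ‖(keldyshCovDiss β T A B Q true true t s) x y‖)
            ≤ cX * K + cX*eβ*K := by
        refine intSplit _ cX (cX*eβ) (fun s => Real.exp (bt*(s + -t)))
          (fun s => Real.exp (bt*(s + (-t - 2*T)))) (Set.Iic t) (Set.Ioi t)
          measurableSet_Iic measurableSet_Ioi (by fun_prop) (by fun_prop)
          (fun s => (Real.exp_pos _).le) (fun s => (Real.exp_pos _).le)
          hcX0 (by positivity) (hF0 _ _ _ _) ?hle 0 t t T ?s1 ?s2 ?i1 ?i2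
        case s1 => rintro s ⟨⟨hs0, hsT⟩, hst⟩; exact ⟨hs0, hst⟩
        case s2 => rintro s ⟨⟨hs0, hsT⟩, hst⟩; exact ⟨le_of_lt hst, hsT⟩
        case i1 =>
          rw [hKdef]
          exact KCD.exp_integral_Icc_le hbt0 ht0 (by linarith) (by linarith)
        case i2 =>
          rw [hKdef]
          exact KCD.exp_integral_Icc_le hbt0 htT (by linarith) (by linarith)
        case hle =>
          intro s hs
          obtain ⟨hs0, hsT⟩ := hs
          rw [ceqTT]
          by_cases hst : s ≤ t
          · rw [Set.indicator_of_mem (Set.mem_Iic.mpr hst),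
              Set.indicator_of_notMem (fun hmem => absurd (Set.mem_Ioi.mp hmem) (not_lt.2 hst))]
            rw [if_pos hst, if_neg (not_lt.2 hst), one_smul, zero_smul, sub_zero, add_zero]
            have h := hrow _ _ (hprod1 (-t) s (s - t) (by linarith)) x
            rw [show (s-t)*bt = bt*(s + -t) by ring] at h
            exact h
          · have hlt : t < s := lt_of_not_ge hst
            rw [Set.indicator_of_notMem (fun hmem => hst (Set.mem_Iic.mp hmem)),
              Set.indicator_of_mem (Set.mem_Ioi.mpr hlt)]
            rw [if_neg hst, if_pos hlt, zero_smul, one_smul, zero_sub, zero_add]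
            have h := hrow _ _ (hprod2 (-t) s (s - t - 2*T) (by linarith)) x
            have h2 : ∑ y, ‖(-(EM (-t) * fM * eQM * EM s * GM (s-t-2*T))) x y‖
                = ∑ y, ‖(EM (-t) * fM * eQM * EM s * GM (s-t-2*T)) x y‖ := by
              refine Finset.sum_congr rfl fun y _ => ?_
              simp [Matrix.neg_apply]
            rw [h2]
            rw [show (s-t-2*T)*bt = bt*(s + (-t-2*T)) by ring, ← mul_assoc] at h
            exact h
      have h2 : (∫ s in Set.Icc (0:ℝ) T,
          ∑ y, ‖(keldyshCovDiss β T A B Q true false t s) x y‖)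
            ≤ (cX*eβ) * K := by
        refine intPlain' _ (-t) (cX*eβ) (by positivity) (hF0 _ _ _ _) ?_ (by linarith)
        intro s hs
        obtain ⟨hs0, hsT⟩ := hs
        rw [ceqTF]
        have h := hrow _ _ (hprod2 (-t) s (-(t+s)) (by linarith)) x
        have h2 : ∑ y, ‖(-(EM (-t) * fM * eQM * EM s * GM (-(t+s)))) x y‖
            = ∑ y, ‖(EM (-t) * fM * eQM * EM s * GM (-(t+s))) x y‖ := by
          refine Finset.sum_congr rfl fun y _ => ?_
          simp [Matrix.neg_apply]
        rw [h2, show bt*(-t - s) = (-(t+s))*bt by ring, mul_assoc cX eβ (Real.exp ((-(t+s))*bt))]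
        exact h
      calc _ ≤ (cX*K + cX*eβ*K) + cX*eβ*K := by
            refine add_le_add h1 ?_
            rw [show cX*eβ*K = (cX*eβ)*K by ring]
            exact h2
        _ ≤ 2*(cX*K) + 2*(cX*(eβ*K)) := by nlinarith
        _ = 2 * cX * (1 + eβ) * (1 / bt) * (1 - Real.exp (-(T * bt))) := hRHS.symm
  case part1b =>
    intro σ t' ht' y
    obtain ⟨ht0, htT⟩ := ht'
    rw [Fintype.sum_bool]
    rcases σ with _ | _
    · -- σ = false : ρ=true plain mirrored, ρ=false split (cond s ≤ t')
      have h1 : (∫ s in Set.Icc (0:ℝ) T,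
          ∑ x, ‖(keldyshCovDiss β T A B Q true false s t') x y‖)
            ≤ (cX*eβ) * K := by
        refine intPlain' _ (-t') (cX*eβ) (by positivity) (hF0' _ _ _ _) ?_ (by linarith)
        intro s hs
        obtain ⟨hs0, hsT⟩ := hs
        rw [ceqTF]
        have h := hcol _ _ (hprod2 (-s) t' (-(s+t')) (by linarith)) y
        have h2 : ∑ x, ‖(-(EM (-s) * fM * eQM * EM t' * GM (-(s+t')))) x y‖
            = ∑ x, ‖(EM (-s) * fM * eQM * EM t' * GM (-(s+t'))) x y‖ := by
          refine Finset.sum_congr rfl fun x _ => ?_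
          simp [Matrix.neg_apply]
        rw [h2, show bt*(-t' - s) = (-(s+t'))*bt by ring, mul_assoc cX eβ (Real.exp ((-(s+t'))*bt))]
        exact h
      have h2 : (∫ s in Set.Icc (0:ℝ) T,
          ∑ x, ‖(keldyshCovDiss β T A B Q false false s t') x y‖)
            ≤ cX * K + cX*eβ*K := by
        refine intSplit _ cX (cX*eβ) (fun s => Real.exp (bt*(s + -t')))
          (fun s => Real.exp (bt*(s + (-t' - 2*T)))) (Set.Iic t') (Set.Ioi t')
          measurableSet_Iic measurableSet_Ioi (by fun_prop) (by fun_prop)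
          (fun s => (Real.exp_pos _).le) (fun s => (Real.exp_pos _).le)
          hcX0 (by positivity) (hF0' _ _ _ _) ?hle 0 t' t' T ?s1 ?s2 ?i1 ?i2
        case s1 => rintro s ⟨⟨hs0, hsT⟩, hst⟩; exact ⟨hs0, hst⟩
        case s2 => rintro s ⟨⟨hs0, hsT⟩, hst⟩; exact ⟨le_of_lt hst, hsT⟩
        case i1 =>
          rw [hKdef]
          exact KCD.exp_integral_Icc_le hbt0 ht0 (by linarith) (by linarith)
        case i2 =>
          rw [hKdef]
          exact KCD.exp_integral_Icc_le hbt0 htT (by linarith) (by linarith)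
        case hle =>
          intro s hs
          obtain ⟨hs0, hsT⟩ := hs
          rw [ceqFF]
          by_cases hst : s ≤ t'
          · rw [Set.indicator_of_mem (Set.mem_Iic.mpr hst),
              Set.indicator_of_notMem (fun hmem => absurd (Set.mem_Ioi.mp hmem) (not_lt.2 hst))]
            rw [if_pos hst, if_neg (not_lt.2 hst), one_smul, zero_smul, sub_zero, add_zero]
            have h := hcol _ _ (hprod1 (-s) t' (s - t') (by linarith)) y
            rw [show (s-t')*bt = bt*(s + -t') by ring] at h
            exact h
          · have hlt : t' < s := lt_of_not_ge hst
            rw [Set.indicator_of_notMem (fun hmem => hst (Set.mem_Iic.mp hmem)),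
              Set.indicator_of_mem (Set.mem_Ioi.mpr hlt)]
            rw [if_neg hst, if_pos hlt, zero_smul, one_smul, zero_sub, zero_add]
            have h := hcol _ _ (hprod2 (-s) t' (s - t' - 2*T) (by linarith)) y
            have h2 : ∑ x, ‖(-(EM (-s) * fM * eQM * EM t' * GM (s-t'-2*T))) x y‖
                = ∑ x, ‖(EM (-s) * fM * eQM * EM t' * GM (s-t'-2*T)) x y‖ := by
              refine Finset.sum_congr rfl fun x _ => ?_
              simp [Matrix.neg_apply]
            rw [h2]
            rw [show (s-t'-2*T)*bt = bt*(s + (-t'-2*T)) by ring, ← mul_assoc] at h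
            exact h
      calc _ ≤ cX*eβ*K + (cX * K + cX*eβ*K) := by
            refine add_le_add ?_ h2
            rw [show cX*eβ*K = (cX*eβ)*K by ring]
            exact h1
        _ ≤ 2*(cX*K) + 2*(cX*(eβ*K)) := by nlinarith
        _ = 2 * cX * (1 + eβ) * (1 / bt) * (1 - Real.exp (-(T * bt))) := hRHS.symm
    · -- σ = true : ρ=true split (cond t' ≤ s), ρ=false plain forward
      have h1 : (∫ s in Set.Icc (0:ℝ) T,
          ∑ x, ‖(keldyshCovDiss β T A B Q true true s t') x y‖)
            ≤ cX * K + cX*eβ*K := by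
        refine intSplit _ cX (cX*eβ) (fun s => Real.exp (bt*(t' - s)))
          (fun s => Real.exp (bt*((t' - 2*T) - s))) (Set.Ici t') (Set.Iio t')
          measurableSet_Ici measurableSet_Iio (by fun_prop) (by fun_prop)
          (fun s => (Real.exp_pos _).le) (fun s => (Real.exp_pos _).le)
          hcX0 (by positivity) (hF0' _ _ _ _) ?hle t' T 0 t' ?s1 ?s2 ?i1 ?i2
        case s1 => rintro s ⟨⟨hs0, hsT⟩, hst⟩; exact ⟨hst, hsT⟩
        case s2 => rintro s ⟨⟨hs0, hsT⟩, hst⟩; exact ⟨hs0, le_of_lt hst⟩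
        case i1 =>
          rw [hKdef]
          exact KCD.exp_integral_Icc_le' hbt0 htT (by linarith) le_rfl
        case i2 =>
          rw [hKdef]
          exact KCD.exp_integral_Icc_le' hbt0 ht0 (by linarith) (by linarith)
        case hle =>
          intro s hs
          obtain ⟨hs0, hsT⟩ := hs
          rw [ceqTT]
          by_cases hts : t' ≤ s
          · rw [Set.indicator_of_mem (Set.mem_Ici.mpr hts),
              Set.indicator_of_notMem (fun hmem => absurd (Set.mem_Iio.mp hmem) (not_lt.2 hts))]
            rw [if_pos hts, if_neg (not_lt.2 hts), one_smul, zero_smul, sub_zero, add_zero]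
            have h := hcol _ _ (hprod1 (-s) t' (t' - s) (by linarith)) y
            rw [show (t'-s)*bt = bt*(t' - s) by ring] at h
            exact h
          · have hlt : s < t' := lt_of_not_ge hts
            rw [Set.indicator_of_notMem (fun hmem => hts (Set.mem_Ici.mp hmem)),
              Set.indicator_of_mem (Set.mem_Iio.mpr hlt)]
            rw [if_neg hts, if_pos hlt, zero_smul, one_smul, zero_sub, zero_add]
            have h := hcol _ _ (hprod2 (-s) t' (t' - s - 2*T) (by linarith)) y
            have h2 : ∑ x, ‖(-(EM (-s) * fM * eQM * EM t' * GM (t'-s-2*T))) x y‖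
                = ∑ x, ‖(EM (-s) * fM * eQM * EM t' * GM (t'-s-2*T)) x y‖ := by
              refine Finset.sum_congr rfl fun x _ => ?_
              simp [Matrix.neg_apply]
            rw [h2]
            rw [show (t'-s-2*T)*bt = bt*((t'-2*T)-s) by ring, ← mul_assoc] at h
            exact h
      have h2 : (∫ s in Set.Icc (0:ℝ) T,
          ∑ x, ‖(keldyshCovDiss β T A B Q false true s t') x y‖) ≤ cX * K := by
        refine intPlain _ (t' - 2*T) cX hcX0 (hF0' _ _ _ _) ?_ (by linarith)
        intro s hs
        obtain ⟨hs0, hsT⟩ := hs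
        rw [ceqFT]
        have h := hcol _ _ (hprod1 (-s) t' (-(2*T)+s+t') (by linarith)) y
        rw [show bt*(s+(t'-2*T)) = (-(2*T)+s+t')*bt by ring]
        exact h
      calc _ ≤ (cX*K + cX*eβ*K) + cX*K := add_le_add h1 h2
        _ ≤ 2*(cX*K) + 2*(cX*(eβ*K)) := by nlinarith
        _ = 2 * cX * (1 + eβ) * (1 / bt) * (1 - Real.exp (-(T * bt))) := hRHS.symm
  case part2a =>
    intro σ t' ht' y
    obtain ⟨ht0, htT⟩ := ht'
    have hmax1 : (1:ℝ) ≤ max 1 (eβ * Real.exp (-(T*bt))) := le_max_left _ _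
    have hmax2 : eβ * Real.exp (-(T*bt)) ≤ max 1 (eβ * Real.exp (-(T*bt))) := le_max_right _ _
    rcases σ with _ | _
    · -- σ = false
      rw [ceqTF]
      have h := hcol _ _ (hprod2 (-T) t' (-(T+t')) (by linarith)) y
      have h2 : ∑ x, ‖(-(EM (-T) * fM * eQM * EM t' * GM (-(T+t')))) x y‖
          = ∑ x, ‖(EM (-T) * fM * eQM * EM t' * GM (-(T+t'))) x y‖ := by
        refine Finset.sum_congr rfl fun x _ => ?_
        simp [Matrix.neg_apply]
      rw [h2]
      refine h.trans ?_
      have hee : Real.exp ((-(T+t'))*bt) ≤ Real.exp (-(T*bt)) :=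
        Real.exp_le_exp.2 (by nlinarith)
      have : eβ * Real.exp ((-(T+t'))*bt) ≤ max 1 (eβ * Real.exp (-(T*bt))) :=
        le_trans (by nlinarith) hmax2
      exact mul_le_mul_of_nonneg_left this hcX0
    · -- σ = true
      rw [ceqTT]
      rw [if_pos htT, if_neg (not_lt.2 htT), one_smul, zero_smul, sub_zero]
      have h := hcol _ _ (hprod1 (-T) t' (t' - T) (by linarith)) y
      refine h.trans ?_
      have hee : Real.exp ((t'-T)*bt) ≤ 1 := Real.exp_le_one_iff.2 (by nlinarith)
      exact mul_le_mul_of_nonneg_left (le_trans hee hmax1) hcX0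
  case part2b =>
    intro ρ t ht x
    obtain ⟨ht0, htT⟩ := ht
    have hmax1 : (1:ℝ) ≤ max 1 (eβ * Real.exp (-(T*bt))) := le_max_left _ _
    have hmax2 : eβ * Real.exp (-(T*bt)) ≤ max 1 (eβ * Real.exp (-(T*bt))) := le_max_right _ _
    rcases ρ with _ | _
    · -- ρ = false
      rw [ceqFF]
      rw [if_pos htT, if_neg (not_lt.2 htT), one_smul, zero_smul, sub_zero]
      have h := hrow _ _ (hprod1 (-t) T (t - T) (by linarith)) x
      refine h.trans ?_
      have hee : Real.exp ((t-T)*bt) ≤ 1 := Real.exp_le_one_iff.2 (by nlinarith)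
      exact mul_le_mul_of_nonneg_left (le_trans hee hmax1) hcX0
    · -- ρ = true
      rw [ceqTF]
      have h := hrow _ _ (hprod2 (-t) T (-(t+T)) (by linarith)) x
      have h2 : ∑ y, ‖(-(EM (-t) * fM * eQM * EM T * GM (-(t+T)))) x y‖
          = ∑ y, ‖(EM (-t) * fM * eQM * EM T * GM (-(t+T))) x y‖ := by
        refine Finset.sum_congr rfl fun y _ => ?_
        simp [Matrix.neg_apply]
      rw [h2]
      refine h.trans ?_
      have hee : Real.exp ((-(t+T))*bt) ≤ Real.exp (-(T*bt)) :=
        Real.exp_le_exp.2 (by nlinarith)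
      have : eβ * Real.exp ((-(t+T))*bt) ≤ max 1 (eβ * Real.exp (-(T*bt))) :=
        le_trans (by nlinarith) hmax2
      exact mul_le_mul_of_nonneg_left this hcX0
end
end

section
/- Let X be a finite nonempty set, β > 0, T > 0, and let A, B, Q be pairwise commuting hermitian operators on ℂ^X with B positive semidefinite. Set A₊ = A + iB, A₋ = A − iB, f₋ᵦ = (I + exp(−βQ) exp(iA₊T) exp(−iA₋T))^{−1}, fᵦ = f₋ᵦ exp(−βQ) exp(iA₊T) exp(−iA₋T), and f = (I + exp(−βQ − 2TB))^{−1}. Then: (i) exp(iA₊T) exp(−iA₋T) = exp(−2TB) and f₋ᵦ = f; (ii) for all t, t' ∈ [0,T], exp(iA₊(T−t)) exp(−iA₋T) f₋ᵦ exp(iA₋t') = exp(−itA) f exp(it'A) exp((−2T+t+t')B); (iii) for all t, t' ∈ [0,T], exp(−iA₋t) f₋ᵦ exp(−βQ) exp(iA₊t') = exp(−itA) f exp(−βQ) exp(it'A) exp(−(t+t')B); (iv) for all t, t' ∈ [0,T], exp(−iA₋t) f₋ᵦ exp(iA₋t') = exp(−itA) f exp(it'A) exp((t'−t)B) and exp(−iA₋t)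 fᵦ exp(iA₋t') = exp(−itA) f exp(−βQ) exp(it'A) exp((t'−t−2T)B). -/
open MeasureTheory
open scoped BigOperators Matrix ComplexOrder

noncomputable section

/-- The Fermi-type operator `f₋ᵦ = (I + e^{−βQ} e^{iA₊T} e^{−iA₋T})⁻¹`, with
`A₊ = A + iB` and `A₋ = A − iB`. -/
noncomputable def fermiMinus {X : Type*} [Fintype X] [DecidableEq X]
    (β T : ℝ) (A B Q : Matrix X X ℂ) : Matrix X X ℂ :=
  (1 + mexp ((-β : ℂ) • Q) * mexp ((Complex.I * (T : ℂ)) • (A + Complex.I • B)) *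
      mexp ((-Complex.I * (T : ℂ)) • (A - Complex.I • B)))⁻¹

/-- The Fermi-type operator `fᵦ = f₋ᵦ e^{−βQ} e^{iA₊T} e^{−iA₋T}`. -/
noncomputable def fermiPlus {X : Type*} [Fintype X] [DecidableEq X]
    (β T : ℝ) (A B Q : Matrix X X ℂ) : Matrix X X ℂ :=
  fermiMinus β T A B Q * mexp ((-β : ℂ) • Q) *
    mexp ((Complex.I * (T : ℂ)) • (A + Complex.I • B)) *
    mexp ((-Complex.I * (T : ℂ)) • (A - Complex.I • B))

/-- The general Keldysh covariance `C_{ρσ}(t,t')`. Here `true` encodes the branch `+`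
and `false` encodes the branch `−`. -/
noncomputable def keldyshCovGen {X : Type*} [Fintype X] [DecidableEq X]
    (β T : ℝ) (A B Q : Matrix X X ℂ) : Bool → Bool → ℝ → ℝ → Matrix X X ℂ :=
  fun ρ σ t t' =>
  match ρ, σ with
  | false, true =>
      mexp ((Complex.I * ((T - t : ℝ) : ℂ)) • (A + Complex.I • B)) *
        mexp ((-Complex.I * (T : ℂ)) • (A - Complex.I • B)) * fermiMinus β T A B Q *
        mexp ((Complex.I * (t' : ℂ)) • (A - Complex.I • B))
  | true, false =>
      -(mexp ((-Complex.I * (t : ℂ)) • (A - Complex.I • B)) * fermiMinus β T A B Q *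
          mexp ((-β : ℂ) • Q) * mexp ((Complex.I * (t' : ℂ)) • (A + Complex.I • B)))
  | true, true =>
      (if t' ≤ t then (1 : ℂ) else 0) •
          (mexp ((-Complex.I * (t : ℂ)) • (A - Complex.I • B)) * fermiMinus β T A B Q *
            mexp ((Complex.I * (t' : ℂ)) • (A - Complex.I • B)))
        - (if t < t' then (1 : ℂ) else 0) •
          (mexp ((-Complex.I * (t : ℂ)) • (A - Complex.I • B)) * fermiPlus β T A B Q *
            mexp ((Complex.I * (t' : ℂ)) • (A - Complex.I • B)))
  | false, false =>
      (if t ≤ t' then (1 : ℂ) else 0) •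
          (mexp ((Complex.I * ((T - t : ℝ) : ℂ)) • (A + Complex.I • B)) *
            mexp ((-Complex.I * (T : ℂ)) • (A - Complex.I • B)) * fermiMinus β T A B Q *
            mexp ((Complex.I * (T : ℂ)) • (A - Complex.I • B)) *
            mexp ((Complex.I * ((T - t' : ℝ) : ℂ)) • (A + Complex.I • B)))
        + (if t' < t then (1 : ℂ) else 0) •
          (mexp ((Complex.I * ((T - t : ℝ) : ℂ)) • (A + Complex.I • B)) *
            mexp ((-Complex.I * (T : ℂ)) • (A - Complex.I • B)) * fermiMinus β T A B Q *
            mexp ((-β : ℂ) • Q) * mexp ((Complex.I * (t' : ℂ)) • (A + Complex.I • B)))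


set_option linter.unusedSectionVars false

namespace KeldyshAux
variable {X : Type*} [Fintype X] [DecidableEq X]

/-- linear combination of three matrices -/
noncomputable def lin (A B Q : Matrix X X ℂ) (a b c : ℂ) : Matrix X X ℂ :=
  a • A + b • B + c • Q

variable (A B Q : Matrix X X ℂ)

theorem lin_comm (hAB : Commute A B) (hAQ : Commute A Q) (hBQ : Commute B Q)
    (a b c a' b' c' : ℂ) : Commute (lin A B Q a b c) (lin A B Q a' b' c') := by
  have hAtom : ∀ (u v : ℂ) (M N : Matrix X X ℂ), Commute M N → Commute (u • M) (v • N) :=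
    fun u v M N h => (h.smul_left u).smul_right v
  exact Commute.add_right
    (Commute.add_right
      (Commute.add_left (Commute.add_left (hAtom _ _ _ _ (Commute.refl A))
        (hAtom _ _ _ _ hAB.symm)) (hAtom _ _ _ _ hAQ.symm))
      (Commute.add_left (Commute.add_left (hAtom _ _ _ _ hAB)
        (hAtom _ _ _ _ (Commute.refl B))) (hAtom _ _ _ _ hBQ.symm)))
    (Commute.add_left (Commute.add_left (hAtom _ _ _ _ hAQ)
      (hAtom _ _ _ _ hBQ)) (hAtom _ _ _ _ (Commute.refl Q)))

theorem mexp_lin_mul (hAB : Commute A B) (hAQ : Commute A Q) (hBQ : Commute B Q)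
    (a b c a' b' c' : ℂ) :
    mexp (lin A B Q a b c) * mexp (lin A B Q a' b' c')
      = mexp (lin A B Q (a + a') (b + b') (c + c')) := by
  rw [mexp, mexp, mexp,
    ← Matrix.exp_add_of_commute _ _ (lin_comm A B Q hAB hAQ hBQ a b c a' b' c')]
  congr 1
  simp only [lin]
  module

theorem mexp_lin_mul' (hAB : Commute A B) (hAQ : Commute A Q) (hBQ : Commute B Q)
    (a b c a' b' c' : ℂ) (Z : Matrix X X ℂ) :
    mexp (lin A B Q a b c) * (mexp (lin A B Q a' b' c') * Z)
      = mexp (lin A B Q (a + a') (b + b') (c + c')) * Z := by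
  rw [← mul_assoc, mexp_lin_mul A B Q hAB hAQ hBQ]

theorem mexp_herm_psd (M : Matrix X X ℂ) (h : M.IsHermitian) : (mexp M).PosSemidef := by
  have hh : ((2:ℂ)⁻¹ • M).IsHermitian := by
    unfold Matrix.IsHermitian at *
    rw [Matrix.conjTranspose_smul, h]
    norm_num
  have key : mexp M = (NormedSpace.exp ((2:ℂ)⁻¹ • M))ᴴ * NormedSpace.exp ((2:ℂ)⁻¹ • M) := by
    rw [mexp, ← Matrix.exp_conjTranspose, hh,
      ← Matrix.exp_add_of_commute _ _ (Commute.refl _)]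
    congr 1
    rw [← add_smul]
    norm_num
  rw [key]
  exact Matrix.posSemidef_conjTranspose_mul_self _

theorem commute_one_add_inv (E N : Matrix X X ℂ) (hE : E.PosSemidef)
    (h : Commute N E) : Commute N (1 + E)⁻¹ := by
  have hpd : (1 + E).PosDef := Matrix.PosDef.add_posSemidef Matrix.PosDef.one hE
  letI := hpd.isUnit.invertible
  rw [← Matrix.invOf_eq_nonsing_inv]
  exact ((Commute.one_right N).add_right h).invOf_right

theorem mexp_commute (M N : Matrix X X ℂ) (h : Commute M N) :
    Commute (mexp M) (mexp N) := by
  unfold Commute SemiconjBy mexp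
  rw [← Matrix.exp_add_of_commute _ _ h,
    ← Matrix.exp_add_of_commute _ _ h.symm, add_comm]

end KeldyshAux


open KeldyshAux in
/-- In the commuting case, the blocks of the general Keldysh covariance reduce to the
explicit formulas with the effective Fermi operator `f = (I + e^{−βQ − 2TB})⁻¹`:
(i) `e^{iA₊T} e^{−iA₋T} = e^{−2TB}` and `f₋ᵦ = f`; (ii)–(iv) the corresponding identities
for the products appearing in `C_{−+}`, `C_{+−}` and `C_{++}`. -/
theorem keldysh_covariance_commuting_case_identities
    {X : Type*} [Fintype X] [DecidableEq X] [Nonempty X]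
    (β T : ℝ) (hβ : 0 < β) (hT : 0 < T)
    (A B Q : Matrix X X ℂ) (hA : A.IsHermitian) (hB' : B.IsHermitian) (hQ : Q.IsHermitian)
    (hB : B.PosSemidef) (hAB : Commute A B) (hAQ : Commute A Q) (hBQ : Commute B Q) :
    (mexp ((Complex.I * (T : ℂ)) • (A + Complex.I • B)) *
        mexp ((-Complex.I * (T : ℂ)) • (A - Complex.I • B))
      = mexp (((-(2 * T) : ℝ) : ℂ) • B) ∧
     fermiMinus β T A B Q = (1 + mexp ((-β : ℂ) • Q + ((-(2 * T) : ℝ) : ℂ) • B))⁻¹) ∧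
    (∀ t ∈ Set.Icc (0 : ℝ) T, ∀ t' ∈ Set.Icc (0 : ℝ) T,
      mexp ((Complex.I * ((T - t : ℝ) : ℂ)) • (A + Complex.I • B)) *
          mexp ((-Complex.I * (T : ℂ)) • (A - Complex.I • B)) * fermiMinus β T A B Q *
          mexp ((Complex.I * (t' : ℂ)) • (A - Complex.I • B))
        = mexp ((-Complex.I * (t : ℂ)) • A) *
            (1 + mexp ((-β : ℂ) • Q + ((-(2 * T) : ℝ) : ℂ) • B))⁻¹ *
            mexp ((Complex.I * (t' : ℂ)) • A) *
            mexp (((-(2 * T) + t + t' : ℝ) : ℂ) • B)) ∧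
    (∀ t ∈ Set.Icc (0 : ℝ) T, ∀ t' ∈ Set.Icc (0 : ℝ) T,
      mexp ((-Complex.I * (t : ℂ)) • (A - Complex.I • B)) * fermiMinus β T A B Q *
          mexp ((-β : ℂ) • Q) * mexp ((Complex.I * (t' : ℂ)) • (A + Complex.I • B))
        = mexp ((-Complex.I * (t : ℂ)) • A) *
            (1 + mexp ((-β : ℂ) • Q + ((-(2 * T) : ℝ) : ℂ) • B))⁻¹ *
            mexp ((-β : ℂ) • Q) * mexp ((Complex.I * (t' : ℂ)) • A) *
            mexp (((-(t + t') : ℝ) : ℂ) • B)) ∧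
    (∀ t ∈ Set.Icc (0 : ℝ) T, ∀ t' ∈ Set.Icc (0 : ℝ) T,
      (mexp ((-Complex.I * (t : ℂ)) • (A - Complex.I • B)) * fermiMinus β T A B Q *
          mexp ((Complex.I * (t' : ℂ)) • (A - Complex.I • B))
        = mexp ((-Complex.I * (t : ℂ)) • A) *
            (1 + mexp ((-β : ℂ) • Q + ((-(2 * T) : ℝ) : ℂ) • B))⁻¹ *
            mexp ((Complex.I * (t' : ℂ)) • A) *
            mexp (((t' - t : ℝ) : ℂ) • B)) ∧
      (mexp ((-Complex.I * (t : ℂ)) • (A - Complex.I • B)) * fermiPlus β T A B Q *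
          mexp ((Complex.I * (t' : ℂ)) • (A - Complex.I • B))
        = mexp ((-Complex.I * (t : ℂ)) • A) *
            (1 + mexp ((-β : ℂ) • Q + ((-(2 * T) : ℝ) : ℂ) • B))⁻¹ *
            mexp ((-β : ℂ) • Q) * mexp ((Complex.I * (t' : ℂ)) • A) *
            mexp (((t' - t - 2 * T : ℝ) : ℂ) • B))) := by

  -- abbreviations
  have hlm := mexp_lin_mul A B Q hAB hAQ hBQ
  have hlm' := mexp_lin_mul' A B Q hAB hAQ hBQ
  have hIrI : ∀ r : ℂ, Complex.I * r * Complex.I = -r := by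
    intro r; rw [mul_comm Complex.I r, mul_assoc, Complex.I_mul_I, mul_neg_one]
  have hPr : ∀ r : ℝ, (Complex.I * (r : ℂ)) • (A + Complex.I • B)
      = lin A B Q (Complex.I * r) (-(r : ℂ)) 0 := by
    intro r
    simp only [lin, smul_add, smul_smul, hIrI]
    module
  have hMr : ∀ r : ℝ, (-Complex.I * (r : ℂ)) • (A - Complex.I • B)
      = lin A B Q (-Complex.I * r) (-(r : ℂ)) 0 := by
    intro r
    have h1 : -Complex.I * (r : ℂ) * Complex.I = (r : ℂ) := by
      rw [neg_mul, neg_mul, hIrI, neg_neg]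
    simp only [lin, smul_sub, smul_smul, h1]
    module
  have hMr' : ∀ r : ℝ, (Complex.I * (r : ℂ)) • (A - Complex.I • B)
      = lin A B Q (Complex.I * r) ((r : ℂ)) 0 := by
    intro r
    simp only [lin, smul_sub, smul_smul, hIrI]
    module
  have hA1 : ∀ z : ℂ, z • A = lin A B Q z 0 0 := by
    intro z; simp only [lin]; module
  have hB1 : ∀ z : ℂ, z • B = lin A B Q 0 z 0 := by
    intro z; simp only [lin]; module
  have hQ1 : ∀ z : ℂ, z • Q = lin A B Q 0 0 z := by
    intro z; simp only [lin]; module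
  -- part (i), first identity
  have part1 : mexp ((Complex.I * (T : ℂ)) • (A + Complex.I • B)) *
      mexp ((-Complex.I * (T : ℂ)) • (A - Complex.I • B))
      = mexp (((-(2 * T) : ℝ) : ℂ) • B) := by
    rw [hPr T, hMr T, hlm, hB1]
    apply congrArg
    simp only [lin]
    push_cast
    module
  have hFarg : (-β : ℂ) • Q + ((-(2 * T) : ℝ) : ℂ) • B
      = lin A B Q 0 ((-(2 * T) : ℝ) : ℂ) (-(β : ℂ)) := by
    simp only [lin]; module
  -- part (i), second identity
  have part2 : fermiMinus β T A B Q
      = (1 + mexp (lin A B Q 0 ((-(2 * T) : ℝ) : ℂ) (-(β : ℂ))))⁻¹ := by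
    unfold fermiMinus
    rw [mul_assoc, part1, hQ1, hB1, hlm]
    norm_num
  have hEpsd : (mexp (lin A B Q 0 ((-(2 * T) : ℝ) : ℂ) (-(β : ℂ)))).PosSemidef := by
    apply mexp_herm_psd
    unfold lin Matrix.IsHermitian
    simp only [Matrix.conjTranspose_add, Matrix.conjTranspose_smul, hA.eq, hB'.eq, hQ.eq,
      star_zero, star_neg, Complex.star_def, Complex.conj_ofReal]
  have hFcomm : ∀ a b c : ℂ, Commute (mexp (lin A B Q a b c))
      ((1 + mexp (lin A B Q 0 ((-(2 * T) : ℝ) : ℂ) (-(β : ℂ))))⁻¹) := by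
    intro a b c
    exact commute_one_add_inv _ _ hEpsd
      (mexp_commute _ _ (lin_comm A B Q hAB hAQ hBQ _ _ _ _ _ _))
  have r3 : ∀ a b c : ℂ, mexp (lin A B Q a b c) *
      (1 + mexp (lin A B Q 0 ((-(2 * T) : ℝ) : ℂ) (-(β : ℂ))))⁻¹
      = (1 + mexp (lin A B Q 0 ((-(2 * T) : ℝ) : ℂ) (-(β : ℂ))))⁻¹ *
        mexp (lin A B Q a b c) := fun a b c => (hFcomm a b c).eq
  have r4 : ∀ (a b c : ℂ) (Z : Matrix X X ℂ), mexp (lin A B Q a b c) *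
      ((1 + mexp (lin A B Q 0 ((-(2 * T) : ℝ) : ℂ) (-(β : ℂ))))⁻¹ * Z)
      = (1 + mexp (lin A B Q 0 ((-(2 * T) : ℝ) : ℂ) (-(β : ℂ))))⁻¹ *
        (mexp (lin A B Q a b c) * Z) := by
    intro a b c Z; rw [← mul_assoc, r3, mul_assoc]
  refine ⟨⟨part1, by rw [part2, hFarg]⟩, ?_, ?_, ?_⟩
  · intro t _ t' _
    rw [part2, hFarg]
    simp only [hPr, hMr, hMr']
    simp only [hA1, hB1, hQ1]
    simp only [mul_assoc]
    simp only [hlm', hlm, r4, r3]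
    congr 1
    apply congrArg
    simp only [lin]
    push_cast
    module
  · intro t _ t' _
    rw [part2, hFarg]
    simp only [hPr, hMr, hMr']
    simp only [hA1, hB1, hQ1]
    simp only [mul_assoc]
    simp only [hlm', hlm, r4, r3]
    congr 1
    apply congrArg
    simp only [lin]
    push_cast
    module
  · intro t _ t' _
    constructor
    · rw [part2, hFarg]
      simp only [hPr, hMr, hMr']
      simp only [hA1, hB1, hQ1]
      simp only [mul_assoc]
      simp only [hlm', hlm, r4, r3]
      congr 1
      apply congrArg
      simp only [lin]
      push_cast
      module
    · unfold fermiPlus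
      rw [part2, hFarg]
      simp only [hPr, hMr, hMr']
      simp only [hA1, hB1, hQ1]
      simp only [mul_assoc]
      simp only [hlm', hlm, r4, r3]
      congr 1
      apply congrArg
      simp only [lin]
      push_cast
      module
end
end

section
/- Let β > 0 and q > 0, and set f_β(E) = (1 + e^{βE})^{−1} for E ∈ ℝ. Define φ: ℝ → ℂ by φ(s) = π^{−1/2} √(q f_β(−q)) / (is − q). Then ∫_ℝ |φ(s)|² ds = f_β(−q) (in particular this is ≤ 1), and ∫_ℝ conj(φ(s)) e^{iβs} φ(s) ds = f_β(q). -/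
open MeasureTheory
open Real Filter Set Topology FourierTransform

lemma my_integral_cexp_neg_mul_Ioi {c : ℂ} (hc : 0 < c.re) :
    ∫ x : ℝ in Ioi (0:ℝ), Complex.exp (-(c * x)) = 1 / c := by
  have hc0 : c ≠ 0 := by
    intro h; rw [h] at hc; simp at hc
  have key := integral_Ioi_of_hasDerivAt_of_tendsto'
      (f := fun x : ℝ => -Complex.exp (-(c * x)) / c)
      (f' := fun x : ℝ => Complex.exp (-(c * x))) (a := 0) (m := 0)
      ?_ ?_ ?_
  · rw [key]; simp [neg_div]
  · intro x _
    have h1 : HasDerivAt (fun x : ℝ => -(c * (x:ℂ))) (-c) x := by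
      have := ((hasDerivAt_id x).ofReal_comp.const_mul c).neg
      exact this.congr_deriv (by simp)
    have := ((h1.cexp).neg).div_const c
    refine this.congr_deriv ?_
    rw [mul_neg, neg_neg, mul_div_assoc, div_self hc0, mul_one]
  · have : IntegrableOn (fun x : ℝ => Real.exp (-c.re * x)) (Ioi 0) :=
      exp_neg_integrableOn_Ioi 0 hc
    apply this.mono' ?_ ?_
    · exact (Complex.continuous_exp.comp (by continuity)).aestronglyMeasurable
    · filter_upwards with x
      simp [Complex.norm_exp, neg_mul]
  · rw [tendsto_zero_iff_norm_tendsto_zero]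
    have h2 : Tendsto (fun x : ℝ => -c.re * x) atTop atBot :=
      Tendsto.const_mul_atTop_of_neg (neg_lt_zero.mpr hc) tendsto_id
    have h3 : Tendsto (fun x : ℝ => Real.exp (-c.re * x) / ‖c‖) atTop (𝓝 (0 / ‖c‖)) :=
      (Real.tendsto_exp_atBot.comp h2).div_const _
    rw [zero_div] at h3
    apply h3.congr
    intro x
    simp [Complex.norm_exp, neg_mul, norm_div]


lemma my_integrable_inv_sq_add {q : ℝ} (hq : 0 < q) :
    Integrable (fun s : ℝ => (s ^ 2 + q ^ 2)⁻¹) := by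
  have h1 : Integrable (fun s : ℝ => q⁻¹ ^ 2 * (1 + (q⁻¹ * s) ^ 2)⁻¹) :=
    ((integrable_inv_one_add_sq.comp_mul_left' (R := q⁻¹) (by positivity)).const_mul _)
  apply h1.congr
  filter_upwards with s
  field_simp
  ring
lemma my_integral_inv_sq_add {q : ℝ} (hq : 0 < q) :
    ∫ s : ℝ, (s ^ 2 + q ^ 2)⁻¹ = π / q := by
  have h := Measure.integral_comp_mul_left (fun x : ℝ => (1 + x ^ 2)⁻¹) q⁻¹
  rw [integral_univ_inv_one_add_sq] at h
  have e : ∀ s : ℝ, (1 + (q⁻¹ * s) ^ 2)⁻¹ = q ^ 2 * (s ^ 2 + q ^ 2)⁻¹ := by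
    intro s
    rw [show (1 + (q⁻¹ * s) ^ 2) = (s ^ 2 + q ^ 2) / q ^ 2 by field_simp; ring, inv_div,
      div_eq_mul_inv]
  simp_rw [e, integral_const_mul, inv_inv, abs_of_pos hq, smul_eq_mul] at h
  have hne : (q:ℝ) ^ 2 ≠ 0 := by positivity
  have hI : (∫ s : ℝ, (s ^ 2 + q ^ 2)⁻¹) = q * π / q ^ 2 := by
    rw [eq_div_iff hne, mul_comm]; exact h
  rw [hI]; field_simp

lemma my_integrable_exp_neg_abs {q : ℝ} (hq : 0 < q) :
    Integrable (fun x : ℝ => Real.exp (-(q * |x|))) := by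
  have hIoi : IntegrableOn (fun x : ℝ => Real.exp (-(q * |x|))) (Ioi 0) := by
    apply (exp_neg_integrableOn_Ioi 0 hq).congr_fun ?_ measurableSet_Ioi
    intro x hx
    simp only []
    rw [abs_of_pos hx, neg_mul]
  have hIic : IntegrableOn (fun x : ℝ => Real.exp (-(q * |x|))) (Iic 0) := by
    rw [← Measure.map_neg_eq_self (volume : Measure ℝ)]
    have m : MeasurableEmbedding fun x : ℝ => -x := (Homeomorph.neg ℝ).measurableEmbedding
    rw [m.integrableOn_map_iff]
    simp_rw [Function.comp_def, abs_neg, neg_preimage, neg_Iic, neg_zero]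
    exact Iff.mpr integrableOn_Ici_iff_integrableOn_Ioi hIoi
  rw [← integrableOn_univ, ← Iic_union_Ioi (a := (0:ℝ))]
  exact hIic.union hIoi

lemma my_fourier_exp_neg_abs {q : ℝ} (hq : 0 < q) (ξ : ℝ) :
    𝓕 (fun x : ℝ => ((Real.exp (-(q * |x|)) : ℝ) : ℂ)) ξ
      = (((2 * q) / (q ^ 2 + (2 * π * ξ) ^ 2) : ℝ) : ℂ) := by
  have c1 : ℂ := 0
  set g : ℝ → ℂ := fun x => ((Real.exp (-(q * |x|)) : ℝ) : ℂ) with hg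
  have hint : Integrable (fun v : ℝ => Complex.exp (↑(-2 * π * v * ξ) * Complex.I) • g v) := by
    apply Integrable.mono' (my_integrable_exp_neg_abs hq)
    · apply AEStronglyMeasurable.smul (f := fun v : ℝ => Complex.exp (↑(-2 * π * v * ξ) * Complex.I)) (g := g)
      · exact (Complex.continuous_exp.comp (by continuity)).aestronglyMeasurable
      · exact ((my_integrable_exp_neg_abs hq).ofReal (𝕜 := ℂ)).aestronglyMeasurable
    · filter_upwards with v
      simp only [smul_eq_mul, norm_mul, Complex.norm_exp]
      simp only [hg, Complex.norm_real, Real.norm_eq_abs, abs_of_nonneg (Real.exp_pos _).le]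
      simp
  rw [Real.fourier_real_eq_integral_exp_smul, ← intervalIntegral.integral_Iic_add_Ioi (b := 0)
    hint.integrableOn hint.integrableOn]
  have hIoi : (∫ v in Ioi (0:ℝ), Complex.exp (↑(-2 * π * v * ξ) * Complex.I) • g v)
      = 1 / ((q : ℂ) + (2 * π * ξ : ℝ) * Complex.I) := by
    rw [← my_integral_cexp_neg_mul_Ioi (c := (q : ℂ) + (2 * π * ξ : ℝ) * Complex.I) (by simp [hq])]
    apply setIntegral_congr_fun measurableSet_Ioi
    intro v hv
    rw [hg]
    simp only [smul_eq_mul]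
    rw [abs_of_pos hv, Complex.ofReal_exp, ← Complex.exp_add]
    congr 1
    push_cast
    ring
  have hIic : (∫ v in Iic (0:ℝ), Complex.exp (↑(-2 * π * v * ξ) * Complex.I) • g v)
      = 1 / ((q : ℂ) - (2 * π * ξ : ℝ) * Complex.I) := by
    have := integral_comp_neg_Iic (0:ℝ)
      (fun v => Complex.exp (↑(-2 * π * (-v) * ξ) * Complex.I) • g (-v))
    simp only [neg_neg, neg_zero] at this
    rw [this]
    rw [← my_integral_cexp_neg_mul_Ioi (c := (q : ℂ) - (2 * π * ξ : ℝ) * Complex.I) (by simp [hq])]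
    apply setIntegral_congr_fun measurableSet_Ioi
    intro v hv
    rw [hg]
    simp only [smul_eq_mul, abs_neg]
    rw [abs_of_pos hv, Complex.ofReal_exp, ← Complex.exp_add]
    congr 1
    push_cast
    ring
  rw [hIic, hIoi]
  have h1 : ((q : ℂ) + (2 * π * ξ : ℝ) * Complex.I) ≠ 0 := by
    intro h
    have := congrArg Complex.re h
    simp at this
    exact hq.ne' this
  have h2 : ((q : ℂ) - (2 * π * ξ : ℝ) * Complex.I) ≠ 0 := by
    intro h
    have := congrArg Complex.re h
    simp at this
    exact hq.ne' this
  rw [div_add_div _ _ h2 h1]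
  have key : ((q:ℂ) - ↑(2*π*ξ)*Complex.I) * ((q:ℂ) + ↑(2*π*ξ)*Complex.I)
      = ((q ^ 2 + (2*π*ξ) ^ 2 : ℝ) : ℂ) := by
    rw [Complex.ext_iff]
    constructor <;> simp [← Complex.ofReal_pow] <;> ring
  have num : (1:ℂ) * ((q:ℂ) + ↑(2*π*ξ)*Complex.I) + ((q:ℂ) - ↑(2*π*ξ)*Complex.I) * 1
      = ((2*q : ℝ) : ℂ) := by push_cast; ring
  rw [key, num, Complex.ofReal_div]

lemma my_cauchy_fourier {β q : ℝ} (hβ : 0 < β) (hq : 0 < q) :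
    ∫ s : ℝ, (((s ^ 2 + q ^ 2)⁻¹ : ℝ) : ℂ) * Complex.exp (Complex.I * (β : ℂ) * (s : ℂ))
      = ((π / q * Real.exp (-(q * β)) : ℝ) : ℂ) := by
  set g : ℝ → ℂ := fun x => ((Real.exp (-(q * |x|)) : ℝ) : ℂ) with hg
  have hcont : Continuous g := by
    apply Complex.continuous_ofReal.comp
    exact Real.continuous_exp.comp (by continuity)
  have hint_g : Integrable g := (my_integrable_exp_neg_abs hq).ofReal
  have hFg : 𝓕 g = fun ξ : ℝ => (((2 * q) / (q ^ 2 + (2 * π * ξ) ^ 2) : ℝ) : ℂ) :=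
    funext fun ξ => my_fourier_exp_neg_abs hq ξ
  have hint_Fg : Integrable (𝓕 g) := by
    rw [hFg]
    have h1 : Integrable (fun ξ : ℝ => ((2 * π * ξ) ^ 2 + q ^ 2)⁻¹) :=
      (my_integrable_inv_sq_add hq).comp_mul_left' (by positivity : (2 * π : ℝ) ≠ 0)
    apply ((h1.const_mul (2 * q)).congr ?_).ofReal
    filter_upwards with ξ
    rw [add_comm ((2 * π * ξ) ^ 2), ← div_eq_mul_inv]
    rfl
  have inv : 𝓕 (𝓕 g) (-β) = g β := by
    rw [← fourierInv_eq_fourier_neg]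
    exact hint_g.fourierInv_fourier_eq hint_Fg hcont.continuousAt
  rw [Real.fourier_real_eq_integral_exp_smul, hFg] at inv
  -- inv : ∫ v, cexp(↑(-2πv(-β))*I) • ↑(2q/(q²+(2πv)²)) = g β
  have hcomp := Measure.integral_comp_mul_left
    (fun s : ℝ => (((s ^ 2 + q ^ 2)⁻¹ : ℝ) : ℂ) * Complex.exp (Complex.I * (β : ℂ) * (s : ℂ)))
    (2 * π)
  have hstep : (∫ x : ℝ, ((((2 * π * x) ^ 2 + q ^ 2)⁻¹ : ℝ) : ℂ)
        * Complex.exp (Complex.I * (β : ℂ) * ((2 * π * x : ℝ) : ℂ)))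
      = ((2 * q : ℝ) : ℂ)⁻¹ * ∫ v : ℝ, Complex.exp (((-2 * π * v * (-β) : ℝ) : ℂ) * Complex.I)
          • ((((2 * q) / (q ^ 2 + (2 * π * v) ^ 2) : ℝ)) : ℂ) := by
    rw [← integral_const_mul]
    congr 1
    funext v
    have hden : ((q ^ 2 + (2 * π * v) ^ 2 : ℝ) : ℂ) ≠ 0 := by
      have : (0:ℝ) < q ^ 2 + (2 * π * v) ^ 2 := by positivity
      exact_mod_cast Complex.ofReal_ne_zero.mpr this.ne'
    have h2q : ((2 * q : ℝ) : ℂ) ≠ 0 := by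
      exact_mod_cast Complex.ofReal_ne_zero.mpr (by positivity : (2 * q : ℝ) ≠ 0)
    rw [smul_eq_mul]
    rw [show Complex.exp (((-2 * π * v * (-β) : ℝ) : ℂ) * Complex.I)
        = Complex.exp (Complex.I * (β : ℂ) * ((2 * π * v : ℝ) : ℂ)) from
      congrArg Complex.exp (by push_cast; ring)]
    rw [mul_comm (Complex.exp _) ((((2 * q) / (q ^ 2 + (2 * π * v) ^ 2) : ℝ)) : ℂ), ← mul_assoc,
      ← Complex.ofReal_inv, ← Complex.ofReal_mul]
    congr 2
    field_simp
    ring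
  rw [hcomp] at hstep
  simp only [] at inv
  rw [inv] at hstep
  have habs : |(2*π)⁻¹| = (2*π)⁻¹ := abs_of_pos (by positivity)
  rw [habs] at hstep
  have hT : (∫ s : ℝ, (((s ^ 2 + q ^ 2)⁻¹ : ℝ) : ℂ) * Complex.exp (Complex.I * (β : ℂ) * (s : ℂ)))
      = (2*π : ℝ) • (((2 * q : ℝ) : ℂ)⁻¹ * g β) := by
    rw [← hstep, smul_smul]
    rw [show (2*π : ℝ) * (2*π)⁻¹ = 1 by field_simp, one_smul]
  rw [hT, hg]
  simp only []
  rw [abs_of_pos hβ]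
  rw [← Complex.ofReal_inv, ← Complex.ofReal_mul, Complex.real_smul, ← Complex.ofReal_mul]
  congr 1
  field_simp


/-- The `L²(ℝ)` identities for the functions used in the Gram representation of the Keldysh
covariance: for `φ(s) = π^{−1/2} √(q f_β(−q)) / (is − q)` with `β, q > 0` and
`f_β(E) = (1 + e^{βE})⁻¹`, one has `∫ |φ(s)|² ds = f_β(−q) ≤ 1` and
`∫ conj(φ(s)) e^{iβs} φ(s) ds = f_β(q)`. -/
theorem gram_function_integral_identities (β q : ℝ) (hβ : 0 < β) (hq : 0 < q) :
    ∀ φ : ℝ → ℂ,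
      (∀ s : ℝ,
        φ s = (((Real.sqrt Real.pi)⁻¹ *
            Real.sqrt (q * (1 + Real.exp (β * (-q)))⁻¹) : ℝ) : ℂ) /
          (Complex.I * (s : ℂ) - (q : ℂ))) →
      (∫ s : ℝ, ‖φ s‖ ^ 2) = (1 + Real.exp (β * (-q)))⁻¹ ∧
      (1 + Real.exp (β * (-q)))⁻¹ ≤ 1 ∧
      (∫ s : ℝ, (starRingEnd ℂ) (φ s) * Complex.exp (Complex.I * (β : ℂ) * (s : ℂ)) * φ s)
        = (((1 + Real.exp (β * q))⁻¹ : ℝ) : ℂ) := by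
  intro φ hφ
  set f : ℝ := (1 + Real.exp (β * (-q)))⁻¹ with hf
  have hfpos : 0 < f := by
    rw [hf]; positivity
  set r : ℝ := (Real.sqrt Real.pi)⁻¹ * Real.sqrt (q * f) with hr
  have hr2 : r ^ 2 = q * f / π := by
    rw [hr, mul_pow, inv_pow, Real.sq_sqrt (le_of_lt Real.pi_pos),
      Real.sq_sqrt (by positivity : (0:ℝ) ≤ q * f), div_eq_inv_mul]
  have hden : ∀ s : ℝ, (Complex.I * (s : ℂ) - (q : ℂ)) ≠ 0 := by
    intro s h
    have := congrArg Complex.re h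
    simp at this
    exact hq.ne' this
  -- pointwise |φ s|² = r² (s²+q²)⁻¹
  have habs : ∀ s : ℝ, ‖φ s‖ ^ 2 = r ^ 2 * (s ^ 2 + q ^ 2)⁻¹ := by
    intro s
    rw [hφ s, norm_div, div_pow, Complex.norm_real, Real.norm_eq_abs, sq_abs, Complex.sq_norm,
      show Complex.normSq (Complex.I * (s:ℂ) - (q:ℂ)) = s ^ 2 + q ^ 2 by
        simp [Complex.normSq_apply]; ring, div_eq_mul_inv]
  have part1 : (∫ s : ℝ, ‖φ s‖ ^ 2) = f := by
    simp_rw [habs]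
    rw [integral_const_mul, my_integral_inv_sq_add hq, hr2]
    field_simp
  refine ⟨part1, ?_, ?_⟩
  · have h1 : (1:ℝ) ≤ 1 + Real.exp (β * (-q)) := by
      have := Real.exp_pos (β * (-q)); linarith
    exact inv_le_one_of_one_le₀ h1
  · -- third identity
    have hpt : ∀ s : ℝ, (starRingEnd ℂ) (φ s) * Complex.exp (Complex.I * (β : ℂ) * (s : ℂ)) * φ s
        = ((q * f / π : ℝ) : ℂ) *
          ((((s ^ 2 + q ^ 2)⁻¹ : ℝ) : ℂ) * Complex.exp (Complex.I * (β : ℂ) * (s : ℂ))) := by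
      intro s
      have hden2 : ((s ^ 2 + q ^ 2 : ℝ) : ℂ) ≠ 0 := by
        have : (0:ℝ) < s ^ 2 + q ^ 2 := by positivity
        exact_mod_cast Complex.ofReal_ne_zero.mpr this.ne'
      have hconj : (starRingEnd ℂ) (Complex.I * (s : ℂ) - (q : ℂ))
          = -(Complex.I * (s : ℂ)) - (q : ℂ) := by
        simp [map_sub, map_mul, Complex.conj_I, Complex.conj_ofReal]
      have hdenc : (-(Complex.I * (s : ℂ)) - (q : ℂ)) ≠ 0 := by
        intro h
        have := congrArg Complex.re h
        simp at this
        exact hq.ne' this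
      have hprod : (-(Complex.I * (s : ℂ)) - (q : ℂ)) * (Complex.I * (s : ℂ) - (q : ℂ))
          = ((s ^ 2 + q ^ 2 : ℝ) : ℂ) := by
        rw [Complex.ext_iff]
        constructor <;> simp [← Complex.ofReal_pow] <;> ring
      rw [hφ s, map_div₀, hconj, Complex.conj_ofReal, div_mul_eq_mul_div, div_mul_div_comm,
        hprod, div_eq_mul_inv, ← Complex.ofReal_inv,
        show ((q * f / π : ℝ) : ℂ) = (r : ℂ) * (r : ℂ) by
          rw [← Complex.ofReal_mul]; norm_cast; rw [← hr2]; ring]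
      ring
    simp_rw [hpt]
    rw [integral_const_mul, my_cauchy_fourier hβ hq, ← Complex.ofReal_mul]
    congr 1
    rw [hf]
    have hE : Real.exp (β * (-q)) = (Real.exp (β * q))⁻¹ := by
      rw [← Real.exp_neg]; ring_nf
    have hE2 : Real.exp (-(q * β)) = (Real.exp (β * q))⁻¹ := by
      rw [← Real.exp_neg]; ring_nf
    rw [hE, hE2]
    have hEpos : (0:ℝ) < Real.exp (β * q) := Real.exp_pos _
    field_simp
    ring
end
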